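/- Let Γ be a nonempty parameter-bounded family of Hénon-form maps. Then for every γ ∈ Γ^ℤ, the set J_γ⁺ = ∂K_γ⁺ has no isolated point; in particular J_γ⁺ is uncountable. The same holds for J_γ⁻ = ∂K_γ⁻. -/

import Mathlib

open Complex Filter Set Topology MeasureTheory Bornology

noncomputable section

/-- A Hénon-form map `f(x,y) = (y + a, p(y) - δ x)` with `δ ≠ 0` and `deg p ≥ 2`. -/
structure HenonMap : Type where
  a : ℂ
  δ : ℂ
  p : Polynomial ℂ
  hδ : δ ≠ 0
  hdeg : 2 ≤ p.natDegree

namespace HenonMap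

/-- The map itself. -/
def toFun (f : HenonMap) (z : ℂ × ℂ) : ℂ × ℂ :=
  (z.2 + f.a, f.p.eval z.2 - f.δ * z.1)

/-- The inverse map `f⁻¹(x,y) = (δ⁻¹ (p(x - a) - y), x - a)`. -/
def invFun (f : HenonMap) (z : ℂ × ℂ) : ℂ × ℂ :=
  (f.δ⁻¹ * (f.p.eval (z.1 - f.a) - z.2), z.1 - f.a)

end HenonMap

/-- `V_R⁺ = {(x,y) : max(R,|x|) < |y|}`. -/
def VPlus (R : ℝ) : Set (ℂ × ℂ) := {z | max R (‖z.1‖) < ‖z.2‖}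

/-- `V_R⁻ = {(x,y) : max(R,|y|) < |x|}`. -/
def VMinus (R : ℝ) : Set (ℂ × ℂ) := {z | max R (‖z.2‖) < ‖z.1‖}

/-- `D_R = {(x,y) : max(|x|,|y|) < R}`. -/
def DDisk (R : ℝ) : Set (ℂ × ℂ) := {z | max (‖z.1‖) (‖z.2‖) < R}

/-- Condition (A) for `(R, ρ)`. -/
def CondA (f : HenonMap) (R ρ : ℝ) : Prop :=
  (∀ z ∈ closure (VPlus R),
    f.toFun z ∈ VPlus R ∧ ρ * ‖z.2‖ < ‖(f.toFun z).2‖) ∧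
  (∀ z ∈ closure (VMinus R),
    f.invFun z ∈ VMinus R ∧ ρ * ‖z.1‖ < ‖(f.invFun z).1‖)

/-- A parameter-bounded family of Hénon-form maps. -/
def ParamBounded (Γ : Set HenonMap) : Prop :=
  ∃ (D : ℕ) (A d₀ Δ m M : ℝ),
    2 ≤ D ∧ 0 ≤ A ∧ 0 < d₀ ∧ d₀ ≤ Δ ∧ 0 < m ∧ m ≤ M ∧
    ∀ f ∈ Γ,
      f.p.natDegree ≤ D ∧ ‖f.a‖ ≤ A ∧
      d₀ ≤ ‖f.δ‖ ∧ ‖f.δ‖ ≤ Δ ∧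
      (∀ i : ℕ, ‖f.p.coeff i‖ ≤ M) ∧
      m ≤ ‖f.p.leadingCoeff‖

/-- Forward composition: `fwd γ n = γ_{n-1} ∘ ⋯ ∘ γ₀`. -/
def fwd (γ : ℤ → HenonMap) : ℕ → (ℂ × ℂ) → ℂ × ℂ
  | 0 => id
  | n + 1 => fun z => (γ (n : ℤ)).toFun (fwd γ n z)

/-- Backward composition: `bwd γ n = γ_{-n}⁻¹ ∘ ⋯ ∘ γ_{-1}⁻¹`. -/
def bwd (γ : ℤ → HenonMap) : ℕ → (ℂ × ℂ) → ℂ × ℂ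
  | 0 => id
  | n + 1 => fun z => (γ (-((n : ℤ) + 1))).invFun (bwd γ n z)

/-- `K_γ⁺` : points with bounded forward orbit. -/
def KPlus (γ : ℤ → HenonMap) : Set (ℂ × ℂ) :=
  {z | IsBounded (Set.range fun n : ℕ => fwd γ n z)}

/-- `K_γ⁻` : points with bounded backward orbit. -/
def KMinus (γ : ℤ → HenonMap) : Set (ℂ × ℂ) :=
  {z | IsBounded (Set.range fun n : ℕ => bwd γ n z)}

/-- `I_γ⁺` : points whose forward orbit tends to infinity in norm. -/
def IPlus (γ : ℤ → HenonMap) : Set (ℂ × ℂ) :=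
  {z | Tendsto (fun n : ℕ => ‖fwd γ n z‖) atTop atTop}

/-- `I_γ⁻` : points whose backward orbit tends to infinity in norm. -/
def IMinus (γ : ℤ → HenonMap) : Set (ℂ × ℂ) :=
  {z | Tendsto (fun n : ℕ => ‖bwd γ n z‖) atTop atTop}

/-- The iterated shift: `(σⁿ γ)_j = γ_{j+n}`. -/
def shiftIter (γ : ℤ → HenonMap) (n : ℕ) : ℤ → HenonMap := fun j => γ (j + n)

/-- `log⁺ t = max (log t) 0`. -/
def logPlus (t : ℝ) : ℝ := max (Real.log t) 0

/-- `G_{γ,n}⁺(z) = (deg γ_{n-1} ⋯ deg γ₀)⁻¹ log⁺ ‖γ_{n-1} ∘ ⋯ ∘ γ₀ (z)‖`. -/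
def GPlusN (γ : ℤ → HenonMap) (n : ℕ) (z : ℂ × ℂ) : ℝ :=
  (∏ j ∈ Finset.range n, ((γ (j : ℤ)).p.natDegree : ℝ))⁻¹ * logPlus ‖fwd γ n z‖

/-- `G_{γ,n}⁻(z) = (deg γ_{-1} ⋯ deg γ_{-n})⁻¹ log⁺ ‖γ_{-n}⁻¹ ∘ ⋯ ∘ γ_{-1}⁻¹ (z)‖`. -/
def GMinusN (γ : ℤ → HenonMap) (n : ℕ) (z : ℂ × ℂ) : ℝ :=
  (∏ j ∈ Finset.range n, ((γ (-((j : ℤ) + 1))).p.natDegree : ℝ))⁻¹ * logPlus ‖bwd γ n z‖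


def WPlus (R : ℝ) : Set (ℂ × ℂ) := {z | max R (norm z.1) ≤ norm z.2}
def WMinus (R : ℝ) : Set (ℂ × ℂ) := {z | max R (norm z.2) ≤ norm z.1}
def VPlus' (R : ℝ) : Set (ℂ × ℂ) := {z | max R (norm z.1) < norm z.2}
def VMinus' (R : ℝ) : Set (ℂ × ℂ) := {z | max R (norm z.2) < norm z.1}

lemma poly_lb (q : Polynomial ℂ) (D : ℕ) (m M t : ℝ) (hm0 : 0 ≤ m)
    (h2 : 2 ≤ q.natDegree) (hdD : q.natDegree ≤ D)
    (hm : m ≤ norm q.leadingCoeff) (hM : ∀ i, norm (q.coeff i) ≤ M)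
    (y : ℂ) (ht : 1 ≤ t) (hty : t ≤ norm y) (hpos : 0 ≤ m * t - D * M) :
    (m * t - D * M) * norm y ≤ norm (q.eval y) := by
  set d := q.natDegree with hd
  have hy1 : (1:ℝ) ≤ norm y := le_trans ht hty
  have hy0 : (0:ℝ) ≤ norm y := le_trans zero_le_one hy1
  have hM0 : 0 ≤ M := le_trans (norm_nonneg _) (hM 0)
  have heval : q.eval y = q.coeff d * y ^ d + ∑ i ∈ Finset.range d, q.coeff i * y ^ i := by
    rw [Polynomial.eval_eq_sum_range, Finset.sum_range_succ]; ring
  have habs : norm (q.coeff d * y ^ d)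
      - norm (∑ i ∈ Finset.range d, q.coeff i * y ^ i) ≤ norm (q.eval y) := by
    rw [heval]
    have := norm_add_le (q.coeff d * y ^ d + ∑ i ∈ Finset.range d, q.coeff i * y ^ i)
      (-(∑ i ∈ Finset.range d, q.coeff i * y ^ i))
    simp only [add_neg_cancel_right, norm_neg] at this
    linarith
  have hsum : norm (∑ i ∈ Finset.range d, q.coeff i * y ^ i)
      ≤ (D * M) * norm y ^ (d - 1) := by
    calc norm (∑ i ∈ Finset.range d, q.coeff i * y ^ i)
        ≤ ∑ i ∈ Finset.range d, norm (q.coeff i * y ^ i) :=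
          norm_sum_le _ _
      _ ≤ ∑ _i ∈ Finset.range d, M * norm y ^ (d - 1) := by
          refine Finset.sum_le_sum fun i hi => ?_
          rw [norm_mul, norm_pow]
          have h1 : norm (q.coeff i) ≤ M := hM i
          have h2' : norm y ^ i ≤ norm y ^ (d - 1) := by
            refine pow_le_pow_right₀ hy1 ?_
            have := Finset.mem_range.mp hi; omega
          have := mul_le_mul h1 h2' (by positivity) hM0
          linarith
      _ = (d : ℝ) * (M * norm y ^ (d-1)) := by
          rw [Finset.sum_const, Finset.card_range, nsmul_eq_mul]
      _ ≤ (D * M) * norm y ^ (d - 1) := by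
          have hdD' : (d:ℝ) ≤ (D:ℝ) := by exact_mod_cast hdD
          have h3 : (0:ℝ) ≤ norm y ^ (d-1) := by positivity
          have h5 : (d:ℝ) * M * (norm y ^ (d-1)) ≤ (D:ℝ) * M * (norm y ^ (d-1)) :=
            mul_le_mul_of_nonneg_right (mul_le_mul_of_nonneg_right hdD' hM0) h3
          rw [← mul_assoc]; exact h5
  have hlead : m * norm y ^ d ≤ norm (q.coeff d * y ^ d) := by
    rw [norm_mul, norm_pow]
    have : m ≤ norm (q.coeff d) := by rwa [hd, ← Polynomial.leadingCoeff]
    have h3 : (0:ℝ) ≤ norm y ^ d := by positivity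
    nlinarith
  have hkey : (m * t - D * M) * norm y
      ≤ m * norm y ^ d - (D * M) * norm y ^ (d - 1) := by
    have e1 : norm y ^ d = norm y ^ (d - 1) * norm y := by
      rw [← pow_succ]; congr 1; omega
    have e2 : norm y ≤ norm y ^ (d - 1) := by
      calc norm y = norm y ^ 1 := (pow_one _).symm
        _ ≤ norm y ^ (d - 1) := pow_le_pow_right₀ hy1 (by omega)
    rw [e1]
    have h4 : m * t ≤ m * norm y := by nlinarith
    nlinarith [mul_le_mul_of_nonneg_right e2 hpos]
  linarith

/-! ## Inverses and existence of a good radius -/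

lemma henon_left_inv (f : HenonMap) (z : ℂ × ℂ) : f.invFun (f.toFun z) = z := by
  simp only [HenonMap.toFun, HenonMap.invFun, add_sub_cancel_right]
  refine Prod.ext ?_ rfl
  simp only [inv_mul_eq_div, sub_sub_cancel]
  exact mul_div_cancel_left₀ _ f.hδ

lemma henon_right_inv (f : HenonMap) (z : ℂ × ℂ) : f.toFun (f.invFun z) = z := by
  simp only [HenonMap.toFun, HenonMap.invFun]
  refine Prod.ext (by ring) ?_
  have h : f.δ * (f.δ⁻¹ * (Polynomial.eval (z.1 - f.a) f.p - z.2))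
      = Polynomial.eval (z.1 - f.a) f.p - z.2 := by
    rw [← mul_assoc, mul_inv_cancel₀ f.hδ, one_mul]
  rw [h]; ring

lemma exists_good (Γ : Set HenonMap) (hΓ : ParamBounded Γ) :
    ∃ R : ℝ, 1 ≤ R ∧ ∀ f ∈ Γ,
      (∀ z : ℂ × ℂ, z ∈ WPlus R →
        (f.toFun z ∈ VPlus' R ∧ 2 * norm z.2 ≤ norm (f.toFun z).2)) ∧
      (∀ z : ℂ × ℂ, z ∈ WMinus R →
        (f.invFun z ∈ VMinus' R ∧ 2 * norm z.1 ≤ norm (f.invFun z).1)) := by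
  obtain ⟨D, A, d₀, Δ, m, M, hD, hA, hd₀, hd₀Δ, hm, hmM, hf⟩ := hΓ
  have hm0 : (0:ℝ) < m := hm
  have hM0 : (0:ℝ) ≤ M := le_trans hm.le hmM
  have hΔ0 : (0:ℝ) < Δ := lt_of_lt_of_le hd₀ hd₀Δ
  have hDM : (0:ℝ) ≤ (D:ℝ) * M := by positivity
  obtain ⟨X, hX⟩ : ∃ X : ℝ, X = (2*D*M + 17*Δ + 5)/m := ⟨_, rfl⟩
  have hXpos : 0 < X := by rw [hX]; apply div_pos; positivity; exact hm0
  have hmX : m * X = 2*D*M + 17*Δ + 5 := by rw [hX]; field_simp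
  obtain ⟨R, hRdef⟩ : ∃ R : ℝ, R = X + 2*A + 2 := ⟨_, rfl⟩
  have hR1 : (1:ℝ) ≤ R := by linarith
  have hR2 : (2:ℝ) ≤ R := by linarith
  have hR2A : 2*A + 2 ≤ R := by linarith
  have hmR : 2*D*M + 17*Δ + 5 ≤ m * R := by
    have h1 : m * X ≤ m * R := mul_le_mul_of_nonneg_left (by linarith) hm0.le
    linarith
  have hmR2 : m * (R/2) = (m * R)/2 := by ring
  refine ⟨R, hR1, fun f hfΓ => ?_⟩
  obtain ⟨hfD, hfA, hfd₀, hfΔ, hfM, hfm⟩ := hf f hfΓ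
  have hδ0 : (0:ℝ) < norm f.δ := lt_of_lt_of_le hd₀ hfd₀
  constructor
  · -- forward estimate
    rintro ⟨x, y⟩ hz
    simp only [WPlus, Set.mem_setOf_eq, max_le_iff] at hz
    obtain ⟨hRy, hxy⟩ := hz
    have hy1 : (1:ℝ) ≤ norm y := le_trans hR1 hRy
    have hy0 : (0:ℝ) < norm y := lt_of_lt_of_le zero_lt_one hy1
    have hpl := poly_lb f.p D m M R hm0.le f.hdeg hfD hfm hfM y hR1 hRy (by linarith)
    simp only [HenonMap.toFun]
    have hsub : norm (Polynomial.eval y f.p) - norm (f.δ * x)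
        ≤ norm (Polynomial.eval y f.p - f.δ * x) := by
      have := norm_sub_norm_le (Polynomial.eval y f.p) (f.δ * x)
      exact this
    have hδx : norm (f.δ * x) ≤ Δ * norm y := by
      rw [norm_mul]
      have := mul_le_mul hfΔ hxy (norm_nonneg _) hΔ0.le
      linarith
    have hy4 : 4 * norm y ≤ norm (Polynomial.eval y f.p - f.δ * x) := by
      have hco : 4 + Δ ≤ m * R - D * M := by linarith
      have h5 : (4 + Δ) * norm y ≤ (m * R - D * M) * norm y :=
        mul_le_mul_of_nonneg_right hco (norm_nonneg _)
      have h6 : (4 + Δ) * norm y = 4 * norm y + Δ * norm y := by ring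
      linarith
    have hxa : norm (y + f.a) ≤ 2 * norm y := by
      have h1 := norm_add_le y f.a
      have h2 : norm f.a ≤ norm y := by linarith
      linarith
    refine ⟨?_, by linarith⟩
    simp only [VPlus', Set.mem_setOf_eq, max_lt_iff]
    exact ⟨by linarith, lt_of_le_of_lt hxa (by linarith)⟩
  · -- backward estimate
    rintro ⟨x, y⟩ hz
    simp only [WMinus, Set.mem_setOf_eq, max_le_iff] at hz
    obtain ⟨hRx, hyx⟩ := hz
    have hx1 : (1:ℝ) ≤ norm x := le_trans hR1 hRx
    have hx0 : (0:ℝ) < norm x := lt_of_lt_of_le zero_lt_one hx1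
    have hA2 : A ≤ R/2 := by linarith
    have hfa : norm f.a ≤ R/2 := le_trans hfA hA2
    have hw1 : norm x / 2 ≤ norm (x - f.a) := by
      have h1 : norm x - norm f.a ≤ norm (x - f.a) := by
        have := norm_sub_norm_le x f.a
        exact this
      linarith
    have hwR : R/2 ≤ norm (x - f.a) := by linarith
    have hpl := poly_lb f.p D m M (R/2) hm0.le f.hdeg hfD hfm hfM (x - f.a)
      (by linarith) hwR (by linarith)
    have hKb : 8*Δ + 2 ≤ m * (R/2) - D * M := by linarith
    have hplx : (4*Δ + 1) * norm x ≤ norm (Polynomial.eval (x - f.a) f.p) := by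
      have h3 : (m * (R/2) - D*M) * (norm x / 2) ≤
          (m * (R/2) - D*M) * norm (x - f.a) :=
        mul_le_mul_of_nonneg_left hw1 (by linarith)
      have h4 : (8*Δ + 2) * (norm x / 2) ≤ (m * (R/2) - D*M) * (norm x / 2) :=
        mul_le_mul_of_nonneg_right hKb (by positivity)
      have h5 : (8*Δ + 2) * (norm x / 2) = (4*Δ + 1) * norm x := by ring
      linarith
    have hnum : 4 * Δ * norm x ≤ norm (Polynomial.eval (x - f.a) f.p - y) := by
      have h1 : norm (Polynomial.eval (x - f.a) f.p) - norm y
          ≤ norm (Polynomial.eval (x - f.a) f.p - y) := by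
        have := norm_sub_norm_le (Polynomial.eval (x - f.a) f.p) y
        exact this
      linarith
    simp only [HenonMap.invFun]
    have hxx : 4 * norm x ≤ norm (f.δ⁻¹ * (Polynomial.eval (x - f.a) f.p - y)) := by
      rw [norm_mul, norm_inv, ← div_eq_inv_mul, le_div_iff₀ hδ0]
      calc 4 * norm x * norm f.δ ≤ 4 * norm x * Δ := by
            exact mul_le_mul_of_nonneg_left hfΔ (by positivity)
        _ = 4 * Δ * norm x := by ring
        _ ≤ _ := hnum
    have hya : norm (x - f.a) ≤ 2 * norm x := by
      have h1 : norm (x - f.a) ≤ norm x + norm f.a := by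
        have := norm_sub_le x f.a
        exact this
      linarith
    refine ⟨?_, by linarith⟩
    simp only [VMinus', Set.mem_setOf_eq, max_lt_iff]
    exact ⟨by linarith, lt_of_le_of_lt hya (by linarith)⟩

/-! ## Generic orbit machinery -/

def orbOf (T : ℕ → ℂ × ℂ → ℂ × ℂ) : ℕ → (ℂ × ℂ) → ℂ × ℂ
  | 0 => id
  | n+1 => fun z => T n (orbOf T n z)

/-- Evaluation of a two-variable polynomial (element of `(ℂ[Y])[X]`) at `z = (z.1, z.2)`,
where the outer variable `X` is sent to `z.1` and the inner variable `Y` to `z.2`. -/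
def pev (z : ℂ × ℂ) : Polynomial (Polynomial ℂ) →+* ℂ :=
  (Polynomial.evalRingHom z.2).comp (Polynomial.evalRingHom (Polynomial.C z.1))

@[simp] lemma pev_X (z : ℂ × ℂ) : pev z Polynomial.X = z.1 := by
  simp [pev]

@[simp] lemma pev_CX (z : ℂ × ℂ) : pev z (Polynomial.C Polynomial.X) = z.2 := by
  simp [pev]

@[simp] lemma pev_CC (z : ℂ × ℂ) (a : ℂ) : pev z (Polynomial.C (Polynomial.C a)) = a := by
  simp [pev]

lemma pev_aeval (z : ℂ × ℂ) (B : Polynomial (Polynomial ℂ)) (p : Polynomial ℂ) :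
    pev z (Polynomial.aeval B p) = Polynomial.eval (pev z B) p := by
  rw [Polynomial.aeval_def, Polynomial.hom_eval₂]
  have h : (pev z).comp (algebraMap ℂ (Polynomial (Polynomial ℂ))) = RingHom.id ℂ := by
    ext r
    simp only [RingHom.comp_apply, RingHom.id_apply]
    have : algebraMap ℂ (Polynomial (Polynomial ℂ)) r = Polynomial.C (Polynomial.C r) := rfl
    rw [this, pev_CC]
  rw [h]
  rfl

lemma pev_continuous (B : Polynomial (Polynomial ℂ)) :
    Continuous fun z : ℂ × ℂ => pev z B := by
  induction B using Polynomial.induction_on' with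
  | add p q hp hq => simp only [map_add]; exact hp.add hq
  | monomial n a =>
      have : (fun z : ℂ × ℂ => pev z (Polynomial.monomial n a))
          = fun z : ℂ × ℂ => Polynomial.eval z.2 a * z.1 ^ n := by
        funext z
        simp [pev, Polynomial.eval_monomial]
      rw [this]
      exact ((a.continuous).comp continuous_snd).mul (continuous_fst.pow n)

/-! ## Generic escape/boundedness analysis -/

section Generic

variable (R : ℝ) (T : ℕ → ℂ × ℂ → ℂ × ℂ)

/-- Points whose orbit never enters `V⁺`. -/
def KT : Set (ℂ × ℂ) := {z | ∀ n, orbOf T n z ∉ VPlus' R}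

lemma VPlus'_subset_WPlus {R : ℝ} {z : ℂ × ℂ} (h : z ∈ VPlus' R) : z ∈ WPlus R := by
  simp only [VPlus', Set.mem_setOf_eq] at h
  simp only [WPlus, Set.mem_setOf_eq]
  exact le_of_lt h

lemma VMinus'_subset_WMinus {R : ℝ} {z : ℂ × ℂ} (h : z ∈ VMinus' R) : z ∈ WMinus R := by
  simp only [VMinus', Set.mem_setOf_eq] at h
  simp only [WMinus, Set.mem_setOf_eq]
  exact le_of_lt h

lemma escVP
    (hT : ∀ n z, z ∈ WPlus R → T n z ∈ VPlus' R ∧ 2 * norm z.2 ≤ norm (T n z).2)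
    {n : ℕ} {z : ℂ × ℂ} (h : orbOf T n z ∈ VPlus' R) (k : ℕ) :
    orbOf T (n+k) z ∈ VPlus' R ∧
      2^k * norm (orbOf T n z).2 ≤ norm (orbOf T (n+k) z).2 := by
  induction k with
  | zero => exact ⟨h, by simp⟩
  | succ k ih =>
      obtain ⟨h1, h2⟩ := ih
      have step := hT (n+k) (orbOf T (n+k) z) (VPlus'_subset_WPlus h1)
      have heq : orbOf T (n+(k+1)) z = T (n+k) (orbOf T (n+k) z) := by
        rw [← Nat.add_assoc]; rfl
      rw [heq]
      refine ⟨step.1, ?_⟩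
      have h3 : 2 * (2^k * norm (orbOf T n z).2)
          ≤ 2 * norm (orbOf T (n+k) z).2 := by linarith
      calc (2:ℝ)^(k+1) * norm (orbOf T n z).2
          = 2 * (2^k * norm (orbOf T n z).2) := by ring
        _ ≤ 2 * norm (orbOf T (n+k) z).2 := h3
        _ ≤ _ := step.2

lemma wminus_chain
    (hB : ∀ n z, T n z ∈ WMinus R → z ∈ VMinus' R ∧ 2 * norm (T n z).1 ≤ norm z.1)
    (k : ℕ) : ∀ (n : ℕ) (z : ℂ × ℂ), orbOf T (n+k) z ∈ WMinus R →
      orbOf T n z ∈ WMinus R ∧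
        2^k * norm (orbOf T (n+k) z).1 ≤ norm (orbOf T n z).1 := by
  induction k with
  | zero => exact fun n z h => ⟨h, by simp⟩
  | succ k ih =>
      intro n z h
      have heq : n + (k+1) = (n+1) + k := by omega
      rw [heq] at h
      obtain ⟨h1, h2⟩ := ih (n+1) z h
      have step := hB n (orbOf T n z) (by exact h1)
      refine ⟨VMinus'_subset_WMinus step.1, ?_⟩
      have h3 : 2 * (2^k * norm (orbOf T ((n+1)+k) z).1)
          ≤ 2 * norm (orbOf T (n+1) z).1 := by linarith
      have step2 : 2 * norm (orbOf T (n+1) z).1 ≤ norm (orbOf T n z).1 := step.2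
      calc (2:ℝ)^(k+1) * norm (orbOf T (n+k+1) z).1
          = 2 * (2^k * norm (orbOf T ((n+1)+k) z).1) := by
            rw [show n+k+1 = (n+1)+k by omega]; ring
        _ ≤ 2 * norm (orbOf T (n+1) z).1 := h3
        _ ≤ _ := step2

lemma small_of {R : ℝ} (hR : 1 ≤ R) {w : ℂ × ℂ} (hv : w ∉ VPlus' R) (hw : w ∉ WMinus R) :
    ‖w‖ ≤ R := by
  simp only [VPlus', Set.mem_setOf_eq, not_lt] at hv
  simp only [WMinus, Set.mem_setOf_eq, not_le] at hw
  have hx : norm w.1 ≤ R ∧ norm w.2 ≤ R := by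
    by_cases hy : norm w.2 ≤ R
    · refine ⟨?_, hy⟩
      have : max R (norm w.2) = R := max_eq_left hy
      rw [this] at hw; exact hw.le
    · push_neg at hy
      exfalso
      have h1 : max R (norm w.1) = norm w.1 := by
        rcases max_cases R (norm w.1) with ⟨h, _⟩ | ⟨h, _⟩
        · rw [h] at hv; linarith
        · exact h
      rw [h1] at hv
      have h2 : max R (norm w.2) = norm w.2 := max_eq_right (by linarith)
      rw [h2] at hw
      linarith
  rw [Prod.norm_def]
  exact max_le hx.1 hx.2

lemma no_wminus_late
    (hR : 1 ≤ R)
    (hB : ∀ n z, T n z ∈ WMinus R → z ∈ VMinus' R ∧ 2 * norm (T n z).1 ≤ norm z.1)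
    (z : ℂ × ℂ) : ∃ N : ℕ, ∀ n, N ≤ n → orbOf T n z ∉ WMinus R := by
  obtain ⟨N, hN⟩ := pow_unbounded_of_one_lt (norm z.1) (one_lt_two (α := ℝ))
  refine ⟨N, fun n hn hmem => ?_⟩
  obtain ⟨h1, h2⟩ := wminus_chain R T hB n 0 z (by simpa using hmem)
  simp only [Nat.zero_add] at h2
  have hxR : R ≤ norm (orbOf T n z).1 := le_trans (le_max_left _ _) hmem
  have h3 : (2:ℝ)^N ≤ 2^n := pow_le_pow_right₀ one_le_two hn
  have h4 : (2:ℝ)^n * 1 ≤ 2^n * norm (orbOf T n z).1 :=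
    mul_le_mul_of_nonneg_left (le_trans hR hxR) (by positivity)
  have h5 : norm (orbOf T 0 z).1 = norm z.1 := rfl
  rw [h5] at h2
  linarith

lemma bounded_iff_KT
    (hR : 1 ≤ R)
    (hT : ∀ n z, z ∈ WPlus R → T n z ∈ VPlus' R ∧ 2 * norm z.2 ≤ norm (T n z).2)
    (hB : ∀ n z, T n z ∈ WMinus R → z ∈ VMinus' R ∧ 2 * norm (T n z).1 ≤ norm z.1)
    (z : ℂ × ℂ) :
    IsBounded (Set.range fun n : ℕ => orbOf T n z) ↔ z ∈ KT R T := by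
  constructor
  · intro hbd n hmem
    obtain ⟨C, hC⟩ := (isBounded_iff_forall_norm_le).mp hbd
    obtain ⟨k, hk⟩ := pow_unbounded_of_one_lt C (one_lt_two (α := ℝ))
    obtain ⟨h1, h2⟩ := escVP R T hT hmem k
    have hyR : R < norm (orbOf T n z).2 := lt_of_le_of_lt (le_max_left _ _) hmem
    have h3 : (2:ℝ)^k * 1 ≤ 2^k * norm (orbOf T n z).2 :=
      mul_le_mul_of_nonneg_left (by linarith) (by positivity)
    have h4 : ‖orbOf T (n+k) z‖ ≤ C := hC _ ⟨n+k, rfl⟩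
    have h5 : norm (orbOf T (n+k) z).2 ≤ ‖orbOf T (n+k) z‖ := by
      exact norm_snd_le _
    linarith
  · intro hKT
    obtain ⟨N, hN⟩ := no_wminus_late R T hR hB z
    have hsub : (Set.range fun n : ℕ => orbOf T n z) ⊆
        ((fun n : ℕ => orbOf T n z) '' (Set.Iio N)) ∪ Metric.closedBall 0 R := by
      rintro w ⟨n, rfl⟩
      by_cases hn : n < N
      · exact Or.inl ⟨n, hn, rfl⟩
      · push_neg at hn
        right
        rw [Metric.mem_closedBall, dist_zero_right]
        exact small_of hR (hKT n) (hN n hn)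
    exact IsBounded.subset
      (IsBounded.union ((Set.finite_Iio N).image _).isBounded Metric.isBounded_closedBall) hsub

lemma VPlus'_open {R : ℝ} : IsOpen (VPlus' R) := by
  have : VPlus' R = {z : ℂ × ℂ | max R (norm z.1) < norm z.2} := rfl
  rw [this]
  exact isOpen_lt (continuous_const.max (continuous_norm.comp continuous_fst))
    (continuous_norm.comp continuous_snd)

lemma orbOf_continuous
    (hpoly : ∀ n, ∃ P Q : Polynomial (Polynomial ℂ),
      ∀ z : ℂ × ℂ, orbOf T n z = (pev z P, pev z Q)) (n : ℕ) :
    Continuous (orbOf T n) := by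
  obtain ⟨P, Q, hPQ⟩ := hpoly n
  have : orbOf T n = fun z => (pev z P, pev z Q) := funext hPQ
  rw [this]
  exact (pev_continuous P).prodMk (pev_continuous Q)

lemma KT_closed
    (hpoly : ∀ n, ∃ P Q : Polynomial (Polynomial ℂ),
      ∀ z : ℂ × ℂ, orbOf T n z = (pev z P, pev z Q)) :
    IsClosed (KT R T) := by
  have : KT R T = (⋃ n, (orbOf T n) ⁻¹' (VPlus' R))ᶜ := by
    ext z
    simp only [KT, Set.mem_setOf_eq, Set.mem_compl_iff, Set.mem_iUnion, Set.mem_preimage]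
    push_neg; rfl
  rw [this]
  exact (isOpen_iUnion fun n =>
    (VPlus'_open).preimage (orbOf_continuous T hpoly n)).isClosed_compl

lemma KT_nonempty
    (hR : 1 ≤ R)
    (hT : ∀ n z, z ∈ WPlus R → T n z ∈ VPlus' R ∧ 2 * norm z.2 ≤ norm (T n z).2)
    (hpoly : ∀ n, ∃ P Q : Polynomial (Polynomial ℂ),
      ∀ z : ℂ × ℂ, orbOf T n z = (pev z P, pev z Q))
    (hdeg : ∀ n, ∃ q : Polynomial ℂ, 1 ≤ q.natDegree ∧
      ∀ w : ℂ, (orbOf T n ((0:ℂ), w)).2 = q.eval w) :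
    (KT R T).Nonempty := by
  set C : ℕ → Set ℂ := fun n => {w | ∀ k, k ≤ n → orbOf T k ((0:ℂ), w) ∉ VPlus' R} with hC
  have hCsub : ∀ n, C n ⊆ Metric.closedBall 0 R := by
    intro n w hw
    have h0 := hw 0 (Nat.zero_le n)
    simp only [orbOf, id_eq, VPlus', Set.mem_setOf_eq, not_lt] at h0
    rw [Metric.mem_closedBall, dist_zero_right]
    have hmax : max R (norm ((0:ℂ),w).1) = R := by
      simp only [norm_zero]
      exact max_eq_left (by linarith)
    rw [hmax] at h0
    exact h0
  have hCclosed : ∀ n, IsClosed (C n) := by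
    intro n
    have : C n = ⋂ k ∈ {k | k ≤ n}, (fun w => orbOf T k ((0:ℂ), w)) ⁻¹' (VPlus' R)ᶜ := by
      ext w; simp [hC]
    rw [this]
    exact isClosed_biInter fun k _ =>
      IsClosed.preimage ((orbOf_continuous T hpoly k).comp (Continuous.prodMk_right _))
        (VPlus'_open).isClosed_compl
  have hCne : ∀ n, (C n).Nonempty := by
    intro n
    obtain ⟨q, hq1, hq2⟩ := hdeg n
    obtain ⟨w, hw⟩ := Complex.exists_root (f := q)
      (Polynomial.natDegree_pos_iff_degree_pos.mp hq1)
    refine ⟨w, fun k hk hmem => ?_⟩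
    obtain ⟨h1, _⟩ := escVP R T hT hmem (n - k)
    rw [show k + (n-k) = n by omega] at h1
    have h2 : norm (orbOf T n ((0:ℂ), w)).2 = 0 := by
      have hw' : q.eval w = 0 := hw
      rw [hq2 w, hw']; simp
    have h3 : R < norm (orbOf T n ((0:ℂ), w)).2 :=
      lt_of_le_of_lt (le_max_left _ _) h1
    rw [h2] at h3; linarith
  have hCanti : ∀ n, C (n+1) ⊆ C n := fun n w hw k hk => hw k (by omega)
  have hint : (⋂ n, C n).Nonempty := by
    refine IsCompact.nonempty_iInter_of_sequence_nonempty_isCompact_isClosed C hCanti hCne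
      ?_ hCclosed
    exact IsCompact.of_isClosed_subset (isCompact_closedBall _ _) (hCclosed 0) (hCsub 0)
  obtain ⟨w, hw⟩ := hint
  refine ⟨((0:ℂ), w), fun n => ?_⟩
  exact (Set.mem_iInter.mp hw n) n le_rfl

lemma KT_ne_univ (hR : 1 ≤ R) : KT R T ≠ Set.univ := by
  intro h
  have hz : (((0:ℂ), ((R+1:ℝ):ℂ)) : ℂ × ℂ) ∈ KT R T := h ▸ Set.mem_univ _
  have := hz 0
  apply this
  simp only [orbOf, id_eq, VPlus', Set.mem_setOf_eq]
  have h1 : norm ((0:ℂ)) = 0 := by simp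
  have h2 : norm (((R+1:ℝ):ℂ)) = R+1 := by
    rw [Complex.norm_real, Real.norm_eq_abs]; rw [abs_of_pos]; linarith
  rw [h1, h2, max_eq_left (by linarith : (0:ℝ) ≤ R)]
  linarith

end Generic

/-! ## A baby argument principle for polynomials -/

lemma circleIntegral_add' {f g : ℂ → ℂ} {c : ℂ} {R : ℝ} (hf : CircleIntegrable f c R)
    (hg : CircleIntegrable g c R) :
    (∮ z in C(c, R), (f z + g z)) = (∮ z in C(c, R), f z) + ∮ z in C(c, R), g z := by
  simp only [circleIntegral, smul_add, intervalIntegral.integral_add hf.out hg.out]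

lemma circleIntegral_sub_inv_outside {r : ℝ} (hr : 0 < r) {b : ℂ} (hb : r < norm b) :
    (∮ w in C(0, r), (w - b)⁻¹) = 0 := by
  refine Complex.circleIntegral_eq_zero_of_differentiable_on_off_countable hr.le
    Set.countable_empty ?_ ?_
  · refine ((continuousOn_id.sub continuousOn_const).inv₀ ?_)
    intro w hw
    rw [Metric.mem_closedBall, dist_zero_right] at hw
    intro hcon
    rw [Pi.sub_apply, sub_eq_zero] at hcon
    simp only [id_eq] at hcon
    rw [hcon] at hw; linarith
  · intro w hw
    simp only [Set.diff_empty] at hw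
    rw [Metric.mem_ball, dist_zero_right] at hw
    refine DifferentiableAt.inv (by fun_prop) ?_
    intro hcon
    rw [sub_eq_zero] at hcon
    rw [hcon] at hw; linarith

open scoped Classical in
lemma prod_eval_ne_zero {r : ℝ} (a : ℂ) (ha : a ≠ 0) (s : Multiset ℂ)
    (hs : ∀ b ∈ s, norm b ≠ r) (w : ℂ) (hw : norm w = r) :
    (Polynomial.C a * (s.map (fun b => Polynomial.X - Polynomial.C b)).prod).eval w ≠ 0 := by
  rw [Polynomial.eval_mul, Polynomial.eval_C, Polynomial.eval_multiset_prod]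
  refine mul_ne_zero ha ?_
  rw [Multiset.map_map]
  refine Multiset.prod_ne_zero ?_
  intro hmem
  obtain ⟨b, hb, hb0⟩ := Multiset.mem_map.mp hmem
  simp only [Function.comp_apply, Polynomial.eval_sub, Polynomial.eval_X, Polynomial.eval_C] at hb0
  rw [sub_eq_zero] at hb0
  exact hs b hb (hb0 ▸ hw)

open scoped Classical in
/-- Circle integral of the logarithmic derivative of a polynomial in factored form
counts the roots inside the circle. -/
lemma count_integral (r : ℝ) (hr : 0 < r) (a : ℂ) (ha : a ≠ 0) (s : Multiset ℂ)
    (hs : ∀ b ∈ s, norm b ≠ r) :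
    (∮ w in C(0, r),
        ((Polynomial.C a * (s.map (fun b => Polynomial.X - Polynomial.C b)).prod).derivative.eval w /
        (Polynomial.C a * (s.map (fun b => Polynomial.X - Polynomial.C b)).prod).eval w))
      = 2 * Real.pi * Complex.I * (Multiset.card (s.filter (fun b => norm b < r)) : ℂ) := by
  induction s using Multiset.induction_on with
  | empty =>
      have heqn : Set.EqOn
          (fun w => ((Polynomial.C a * ((0 : Multiset ℂ).map
              (fun b => Polynomial.X - Polynomial.C b)).prod).derivative.eval w /
            (Polynomial.C a * ((0 : Multiset ℂ).map
              (fun b => Polynomial.X - Polynomial.C b)).prod).eval w))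
          (fun _ => (0:ℂ)) (Metric.sphere 0 r) := by
        intro w _
        simp
      rw [circleIntegral.integral_congr hr.le heqn]
      simp [circleIntegral]
  | cons b s ih =>
      have hb : norm b ≠ r := hs b (Multiset.mem_cons_self _ _)
      have hs' : ∀ x ∈ s, norm x ≠ r := fun x hx => hs x (Multiset.mem_cons_of_mem hx)
      set Q : Polynomial ℂ := Polynomial.C a * (s.map (fun b => Polynomial.X - Polynomial.C b)).prod
        with hQ
      have hfactor : Polynomial.C a * ((b ::ₘ s).map
          (fun b => Polynomial.X - Polynomial.C b)).prod = (Polynomial.X - Polynomial.C b) * Q := by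
        rw [hQ, Multiset.map_cons, Multiset.prod_cons]; ring
      rw [hfactor]
      have heqn : Set.EqOn
          (fun w => (((Polynomial.X - Polynomial.C b) * Q).derivative.eval w /
              ((Polynomial.X - Polynomial.C b) * Q).eval w))
          (fun w => (w - b)⁻¹ + Q.derivative.eval w / Q.eval w) (Metric.sphere 0 r) := by
        intro w hw
        rw [mem_sphere_zero_iff_norm] at hw
        have hwb : w - b ≠ 0 := by
          intro hcon; rw [sub_eq_zero] at hcon; exact hb (hcon ▸ hw)
        have hQw : Q.eval w ≠ 0 := prod_eval_ne_zero a ha s hs' w hw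
        simp only [Polynomial.derivative_mul, Polynomial.derivative_sub, Polynomial.derivative_X,
          Polynomial.derivative_C, sub_zero, one_mul, Polynomial.eval_add, Polynomial.eval_mul,
          Polynomial.eval_sub, Polynomial.eval_X, Polynomial.eval_C]
        field_simp
      rw [circleIntegral.integral_congr hr.le heqn]
      have hint1 : CircleIntegrable (fun w => (w - b)⁻¹) (0:ℂ) r := by
        refine ContinuousOn.circleIntegrable hr.le ?_
        refine (continuousOn_id.sub continuousOn_const).inv₀ ?_
        intro w hw
        rw [mem_sphere_zero_iff_norm] at hw
        intro hcon; rw [Pi.sub_apply, id_eq, sub_eq_zero] at hcon; exact hb (hcon ▸ hw)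
      have hint2 : CircleIntegrable (fun w => Q.derivative.eval w / Q.eval w) (0:ℂ) r := by
        refine ContinuousOn.circleIntegrable hr.le ?_
        refine ContinuousOn.div (Polynomial.continuous _).continuousOn
          (Polynomial.continuous _).continuousOn ?_
        intro w hw
        rw [mem_sphere_zero_iff_norm] at hw
        exact prod_eval_ne_zero a ha s hs' w hw
      rw [circleIntegral_add' hint1 hint2, ih hs']
      have hcard : (Multiset.filter (fun b => norm b < r) (b ::ₘ s)) =
          (if norm b < r then {b} else 0) + Multiset.filter (fun b => norm b < r) s := by
        rw [Multiset.filter_cons]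
      rcases lt_or_gt_of_ne hb with hblt | hbgt
      · rw [circleIntegral.integral_sub_inv_of_mem_ball
          (by rw [Metric.mem_ball, dist_zero_right]; exact hblt)]
        rw [hcard, if_pos hblt]
        simp only [Multiset.card_add, Multiset.card_singleton, Nat.cast_add, Nat.cast_one]
        try ring
      · rw [circleIntegral_sub_inv_outside hr hbgt]
        rw [hcard, if_neg (by linarith)]
        simp only [Multiset.card_add, Multiset.card_zero, Nat.cast_add, Nat.cast_zero, zero_add]
        try ring

open scoped Classical in
lemma log_deriv_integral (q : Polynomial ℂ) (r : ℝ) (hr : 0 < r)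
    (hq : ∀ w : ℂ, norm w = r → q.eval w ≠ 0) :
    (∮ w in C(0, r), (q.derivative.eval w / q.eval w))
      = 2 * Real.pi * Complex.I *
        (Multiset.card (q.roots.filter (fun b => norm b < r)) : ℂ) := by
  have hq0 : q ≠ 0 := by
    intro hcon
    refine hq ((r:ℝ):ℂ) ?_ (by rw [hcon]; simp)
    rw [Complex.norm_real, Real.norm_eq_abs, abs_of_pos hr]
  have hlc : q.leadingCoeff ≠ 0 := Polynomial.leadingCoeff_ne_zero.mpr hq0
  have hroots : ∀ b ∈ q.roots, norm b ≠ r := by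
    intro b hb hcon
    exact hq b hcon ((Polynomial.mem_roots hq0).mp hb)
  have hfact := Polynomial.Splits.eq_prod_roots (IsAlgClosed.splits q)
  calc (∮ w in C(0, r), (q.derivative.eval w / q.eval w))
      = ∮ w in C(0, r),
        ((Polynomial.C q.leadingCoeff *
            (q.roots.map (fun b => Polynomial.X - Polynomial.C b)).prod).derivative.eval w /
         (Polynomial.C q.leadingCoeff *
            (q.roots.map (fun b => Polynomial.X - Polynomial.C b)).prod).eval w) := by
        refine circleIntegral.integral_congr hr.le fun w _ => ?_
        rw [← hfact]
    _ = _ := count_integral r hr _ hlc _ hroots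

/-! ## Slice polynomials and the key non-vanishing lemma -/

@[simp] lemma pev_C (z : ℂ × ℂ) (f : Polynomial ℂ) :
    pev z (Polynomial.C f) = f.eval z.2 := by simp [pev]

lemma deriv_slice (Q : Polynomial (Polynomial ℂ)) :
    ∃ Qd : Polynomial (Polynomial ℂ), ∀ (c y : ℂ),
      (Polynomial.derivative (Q.eval (Polynomial.C c))).eval y = pev (c, y) Qd := by
  induction Q using Polynomial.induction_on' with
  | add p q hp hq =>
      obtain ⟨P1, h1⟩ := hp
      obtain ⟨P2, h2⟩ := hq
      exact ⟨P1 + P2, fun c y => by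
        simp only [Polynomial.eval_add, map_add, Polynomial.derivative_add, h1, h2]⟩
  | monomial n a =>
      refine ⟨Polynomial.C (Polynomial.derivative a) * Polynomial.X ^ n, fun c y => ?_⟩
      have h1 : (Polynomial.monomial n a).eval (Polynomial.C c) = a * (Polynomial.C c) ^ n :=
        Polynomial.eval_monomial
      have h2 : Polynomial.derivative ((Polynomial.C c : Polynomial ℂ) ^ n) = 0 := by
        rw [← map_pow, Polynomial.derivative_C]
      rw [h1, Polynomial.derivative_mul, h2, mul_zero, add_zero]
      rw [map_mul (pev (c,y)), map_pow (pev (c,y)), pev_C, pev_X]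
      simp [Polynomial.eval_mul, Polynomial.eval_pow]

/-- The key analytic step: if all potential zeros of the polynomial function `pev · Q` inside
a closed ball are confined to a small concentric ball, then there are no zeros at all. -/
lemma no_zero_in_ball (z : ℂ × ℂ) (η : ℝ) (hη : 0 < η)
    (Q : Polynomial (Polynomial ℂ))
    (hconf : ∀ w ∈ Metric.closedBall z (8*η), pev w Q = 0 → w ∈ Metric.ball z η) :
    ∀ w ∈ Metric.closedBall z (8*η), pev w Q ≠ 0 := by
  classical
  intro w₀ hw₀ball hg0
  have hw₀η : w₀ ∈ Metric.ball z η := hconf w₀ hw₀ball hg0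
  set r : ℝ := 2*η with hr
  have hr0 : 0 < r := by positivity
  obtain ⟨Qd, hQd⟩ := deriv_slice Q
  -- the moving slice polynomial
  set q : ℝ → Polynomial ℂ := fun t =>
    (Q.eval (Polynomial.C (w₀.1 + ((t*(4*η) : ℝ) : ℂ)))).comp
      (Polynomial.X + Polynomial.C w₀.2) with hq
  set pt : ℝ → ℂ → ℂ × ℂ := fun t lam => (w₀.1 + ((t*(4*η) : ℝ) : ℂ), lam + w₀.2) with hpt
  have hqe : ∀ t lam, (q t).eval lam = pev (pt t lam) Q := by
    intro t lam
    simp only [hq, Polynomial.eval_comp, Polynomial.eval_add, Polynomial.eval_X,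
      Polynomial.eval_C, hpt]
    rfl
  have hqd : ∀ t lam, (q t).derivative.eval lam = pev (pt t lam) Qd := by
    intro t lam
    simp only [hq, Polynomial.derivative_comp, Polynomial.derivative_add, Polynomial.derivative_X,
      Polynomial.derivative_C, add_zero, Polynomial.eval_mul, Polynomial.eval_comp,
      Polynomial.eval_one, mul_one, one_mul, Polynomial.eval_add, Polynomial.eval_X,
      Polynomial.eval_C]
    exact hQd _ _
  -- distances of the base point
  have hα : norm (w₀.1 - z.1) < η := by
    have := hw₀η
    rw [Metric.mem_ball, Prod.dist_eq, Complex.dist_eq, Complex.dist_eq] at this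
    exact lt_of_le_of_lt (le_max_left _ _) this
  have hβ : norm (w₀.2 - z.2) < η := by
    have := hw₀η
    rw [Metric.mem_ball, Prod.dist_eq, Complex.dist_eq, Complex.dist_eq] at this
    exact lt_of_le_of_lt (le_max_right _ _) this
  -- geometry: membership of the moved points
  have hgeo : ∀ t : ℝ, 0 ≤ t → t ≤ 1 → ∀ lam : ℂ, norm lam ≤ r →
      pt t lam ∈ Metric.closedBall z (8*η) := by
    intro t ht0 ht1 lam hlam
    rw [Metric.mem_closedBall, Prod.dist_eq, Complex.dist_eq, Complex.dist_eq]
    have h1 : norm (w₀.1 + ((t*(4*η):ℝ):ℂ) - z.1) ≤ 5*η := by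
      have := norm_add_le (w₀.1 - z.1) ((t*(4*η):ℝ):ℂ)
      have h2 : norm (((t*(4*η):ℝ)):ℂ) = t*(4*η) := by
        rw [Complex.norm_real, Real.norm_eq_abs]
        exact abs_of_nonneg (mul_nonneg ht0 (by positivity))
      have h3 : w₀.1 + ((t*(4*η):ℝ):ℂ) - z.1 = (w₀.1 - z.1) + ((t*(4*η):ℝ):ℂ) := by ring
      rw [h3]
      nlinarith
    have h2 : norm (lam + w₀.2 - z.2) ≤ 3*η := by
      have := norm_add_le lam (w₀.2 - z.2)
      have h3 : lam + w₀.2 - z.2 = lam + (w₀.2 - z.2) := by ring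
      rw [h3]
      rw [hr] at hlam
      linarith
    exact max_le (by linarith) (by linarith)
  have hcirc : ∀ t : ℝ, 0 ≤ t → t ≤ 1 → ∀ lam : ℂ, norm lam = r →
      pev (pt t lam) Q ≠ 0 := by
    intro t ht0 ht1 lam hlam hzero
    have hmem := hgeo t ht0 ht1 lam hlam.le
    have hball := hconf _ hmem hzero
    rw [Metric.mem_ball, Prod.dist_eq, Complex.dist_eq, Complex.dist_eq] at hball
    simp only [hpt] at hball
    have h6 : norm (lam + w₀.2 - z.2) < η :=
      lt_of_le_of_lt (le_max_right _ _) hball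
    have h7 : lam + w₀.2 - z.2 = lam + (w₀.2 - z.2) := by ring
    rw [h7] at h6
    have h4 := norm_add_le (lam + (w₀.2 - z.2)) (-(w₀.2 - z.2))
    simp only [add_neg_cancel_right, norm_neg] at h4
    rw [hr] at hlam
    linarith
  have ht1disc : ∀ lam : ℂ, norm lam ≤ r → pev (pt 1 lam) Q ≠ 0 := by
    intro lam hlam hzero
    have hmem := hgeo 1 zero_le_one le_rfl lam hlam
    have hball := hconf _ hmem hzero
    rw [Metric.mem_ball, Prod.dist_eq, Complex.dist_eq, Complex.dist_eq] at hball
    simp only [hpt] at hball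
    have h6 : norm (w₀.1 + (((1:ℝ)*(4*η):ℝ):ℂ) - z.1) < η :=
      lt_of_le_of_lt (le_max_left _ _) hball
    have h7 : w₀.1 + ((((1:ℝ)*(4*η):ℝ)):ℂ) - z.1
        = ((((1:ℝ)*(4*η):ℝ)):ℂ) + (w₀.1 - z.1) := by ring
    rw [h7] at h6
    have h4 := norm_add_le ((((1:ℝ)*(4*η):ℝ):ℂ) + (w₀.1 - z.1)) (-(w₀.1 - z.1))
    simp only [add_neg_cancel_right, norm_neg] at h4
    have h5 : norm ((((1:ℝ)*(4*η):ℝ)):ℂ) = 4*η := by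
      rw [Complex.norm_real, Real.norm_eq_abs]
      rw [_root_.abs_of_nonneg (by positivity : (0:ℝ) ≤ 1*(4*η))]
      ring
    rw [h5] at h4
    linarith
  -- circle non-vanishing of q t
  have hqcirc : ∀ t : ℝ, 0 ≤ t → t ≤ 1 → ∀ lam : ℂ, norm lam = r →
      (q t).eval lam ≠ 0 := by
    intro t ht0 ht1 lam hlam
    rw [hqe]; exact hcirc t ht0 ht1 lam hlam
  -- the winding numbers
  set cnt : ℝ → ℕ := fun t =>
    Multiset.card ((q t).roots.filter (fun b => norm b < r)) with hcnt
  set J : ℝ → ℂ := fun t => ∮ w in C(0, r), ((q t).derivative.eval w / (q t).eval w) with hJ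
  have hJval : ∀ t : ℝ, 0 ≤ t → t ≤ 1 →
      J t = 2 * Real.pi * Complex.I * (cnt t : ℂ) :=
    fun t ht0 ht1 => log_deriv_integral (q t) r hr0 (fun w hw => hqcirc t ht0 ht1 w hw)
  have hq1ne : q 1 ≠ 0 := by
    intro hcon
    refine hqcirc 1 zero_le_one le_rfl ((r:ℝ):ℂ) ?_ (by rw [hcon]; simp)
    rw [Complex.norm_real, Real.norm_eq_abs, abs_of_pos hr0]
  have hcnt1 : cnt 1 = 0 := by
    rw [hcnt]
    simp only []
    rw [Multiset.card_eq_zero, Multiset.filter_eq_nil]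
    intro b hb hblt
    have hb0 : (q 1).eval b = 0 := ((Polynomial.mem_roots hq1ne).mp hb)
    rw [hqe] at hb0
    exact ht1disc b hblt.le hb0
  have hq0ne : q 0 ≠ 0 := by
    intro hcon
    refine hqcirc 0 le_rfl zero_le_one ((r:ℝ):ℂ) ?_ (by rw [hcon]; simp)
    rw [Complex.norm_real, Real.norm_eq_abs, abs_of_pos hr0]
  have hpt00 : pt 0 0 = w₀ := by
    simp only [hpt, zero_mul, Complex.ofReal_zero, add_zero, zero_add]
  have hcnt0 : 1 ≤ cnt 0 := by
    have hmem0 : (0:ℂ) ∈ (q 0).roots.filter (fun b => norm b < r) := by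
      refine Multiset.mem_filter.mpr ⟨?_, by simp [hr0]⟩
      refine (Polynomial.mem_roots hq0ne).mpr ?_
      show (q 0).eval 0 = 0
      rw [hqe, hpt00, hg0]
    exact Multiset.card_pos_iff_exists_mem.mpr ⟨_, hmem0⟩
  -- continuity of J on [0,1]
  set F : ℝ × ℝ → ℂ := fun p => (circleMap 0 r p.2 * Complex.I) *
      (pev (pt p.1 (circleMap 0 r p.2)) Qd / pev (pt p.1 (circleMap 0 r p.2)) Q) with hF
  have hJint : ∀ t : ℝ, J t = ∫ θ in (0:ℝ)..(2*Real.pi), F (t, θ) := by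
    intro t
    rw [hJ]
    simp only []
    rw [circleIntegral]
    refine intervalIntegral.integral_congr fun θ hθ => ?_
    rw [deriv_circleMap, smul_eq_mul, hqe, hqd, hF]
  have hptc : Continuous fun p : ℝ × ℝ => pt p.1 (circleMap 0 r p.2) := by
    simp only [hpt]
    refine Continuous.prodMk ?_ ?_
    · exact continuous_const.add
        (Complex.continuous_ofReal.comp (continuous_fst.mul continuous_const))
    · exact ((continuous_circleMap 0 r).comp continuous_snd).add continuous_const
  have habs_cm : ∀ θ : ℝ, norm (circleMap 0 r θ) = r := by
    intro θ; rw [norm_circleMap_zero, abs_of_pos hr0]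
  have hFcont : ContinuousOn F ((Set.Icc (0:ℝ) 1) ×ˢ (Set.univ : Set ℝ)) := by
    refine ContinuousOn.mul
      ((((continuous_circleMap 0 r).comp continuous_snd).mul continuous_const).continuousOn) ?_
    refine ContinuousOn.div (((pev_continuous Qd).comp hptc).continuousOn)
      (((pev_continuous Q).comp hptc).continuousOn) ?_
    rintro ⟨t, θ⟩ hp
    have ht : t ∈ Set.Icc (0:ℝ) 1 := hp.1
    exact hcirc t ht.1 ht.2 _ (habs_cm θ)
  have hFint : ∀ u : ℝ, u ∈ Set.Icc (0:ℝ) 1 →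
      IntervalIntegrable (fun θ => F (u, θ)) MeasureTheory.volume 0 (2*Real.pi) := by
    intro u hu
    refine Continuous.intervalIntegrable ?_ _ _
    have hcg : Continuous fun θ : ℝ => ((u, θ) : ℝ × ℝ) :=
      continuous_const.prodMk continuous_id
    exact hFcont.comp_continuous hcg (fun θ => ⟨hu, trivial⟩)
  have hJcont : ContinuousOn J (Set.Icc (0:ℝ) 1) := by
    have hK : IsCompact ((Set.Icc (0:ℝ) 1) ×ˢ (Set.Icc (0:ℝ) (2*Real.pi))) :=
      isCompact_Icc.prod isCompact_Icc
    have hucF : UniformContinuousOn F ((Set.Icc (0:ℝ) 1) ×ˢ (Set.Icc (0:ℝ) (2*Real.pi))) :=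
      hK.uniformContinuousOn_of_continuous
        (hFcont.mono (fun p hp => ⟨hp.1, trivial⟩))
    rw [Metric.continuousOn_iff]
    intro t₀ ht₀ ε' hε'
    rw [Metric.uniformContinuousOn_iff] at hucF
    obtain ⟨δ, hδ0, hδ⟩ := hucF (ε'/(2*Real.pi+1)) (by positivity)
    refine ⟨δ, hδ0, fun t ht hdist => ?_⟩
    have hsub : ∀ θ ∈ Set.uIoc (0:ℝ) (2*Real.pi),
        ‖F (t, θ) - F (t₀, θ)‖ ≤ ε'/(2*Real.pi+1) := by
      intro θ hθ
      have hθ' : θ ∈ Set.Icc (0:ℝ) (2*Real.pi) := by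
        rw [Set.uIoc_of_le Real.two_pi_pos.le] at hθ
        exact ⟨hθ.1.le, hθ.2⟩
      have h1 : ((t, θ) : ℝ × ℝ) ∈ (Set.Icc (0:ℝ) 1) ×ˢ (Set.Icc (0:ℝ) (2*Real.pi)) :=
        ⟨ht, hθ'⟩
      have h2 : ((t₀, θ) : ℝ × ℝ) ∈ (Set.Icc (0:ℝ) 1) ×ˢ (Set.Icc (0:ℝ) (2*Real.pi)) :=
        ⟨ht₀, hθ'⟩
      have h3 : dist ((t, θ) : ℝ × ℝ) ((t₀, θ) : ℝ × ℝ) < δ := by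
        rw [Prod.dist_eq]
        simp only [dist_self]
        rw [max_eq_left dist_nonneg]
        exact hdist
      have := hδ _ h1 _ h2 h3
      rw [dist_eq_norm] at this
      exact this.le
    have hJsub : J t - J t₀ = ∫ θ in (0:ℝ)..(2*Real.pi), (F (t, θ) - F (t₀, θ)) := by
      rw [hJint t, hJint t₀, intervalIntegral.integral_sub (hFint t ht) (hFint t₀ ht₀)]
    rw [dist_eq_norm, hJsub]
    calc ‖∫ θ in (0:ℝ)..(2*Real.pi), (F (t, θ) - F (t₀, θ))‖
        ≤ ε'/(2*Real.pi+1) * |2*Real.pi - 0| :=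
          intervalIntegral.norm_integral_le_of_norm_le_const hsub
      _ = 2*Real.pi * (ε'/(2*Real.pi+1)) := by
          rw [sub_zero, abs_of_pos Real.two_pi_pos]; ring
      _ < ε' := by
          have hlt : 2*Real.pi/(2*Real.pi+1) < 1 := by
            rw [div_lt_one (by positivity)]; linarith [Real.two_pi_pos]
          have h9 : 2*Real.pi * (ε'/(2*Real.pi+1)) = (2*Real.pi/(2*Real.pi+1)) * ε' := by
            field_simp
          rw [h9]
          have := mul_lt_mul_of_pos_right hlt hε'
          rw [one_mul] at this
          exact this
  -- intermediate value argument
  set φ : ℝ → ℝ := fun t => (J t).im with hφ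
  have hφcont : ContinuousOn φ (Set.Icc (0:ℝ) 1) := Complex.continuous_im.comp_continuousOn hJcont
  have him : ∀ t : ℝ, 0 ≤ t → t ≤ 1 → φ t = 2*Real.pi*(cnt t : ℝ) := by
    intro t ht0 ht1
    rw [hφ]
    simp only []
    rw [hJval t ht0 ht1]
    have : (2 * (Real.pi:ℂ) * Complex.I * ((cnt t : ℕ):ℂ))
        = ((2*Real.pi*((cnt t : ℕ):ℝ) : ℝ) : ℂ) * Complex.I := by push_cast; ring
    rw [this, Complex.mul_I_im, Complex.ofReal_re]
  have hφ1 : φ 1 = 0 := by rw [him 1 zero_le_one le_rfl, hcnt1]; simp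
  have hφ0 : φ 0 = 2*Real.pi*(cnt 0 : ℝ) := him 0 le_rfl zero_le_one
  have hπmem : Real.pi ∈ Set.Icc (φ 1) (φ 0) := by
    refine ⟨by rw [hφ1]; exact Real.pi_pos.le, ?_⟩
    rw [hφ0]
    have hc : (1:ℝ) ≤ (cnt 0 : ℝ) := by exact_mod_cast hcnt0
    nlinarith [Real.pi_pos]
  obtain ⟨t₁, ht₁, hφt₁⟩ := intermediate_value_Icc' zero_le_one hφcont hπmem
  have hval : 2*Real.pi*(cnt t₁ : ℝ) = Real.pi := by
    rw [← him t₁ ht₁.1 ht₁.2, hφt₁]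
  have h2k : (2:ℝ)*(cnt t₁ : ℝ) = 1 := by
    have h' : Real.pi * (2*(cnt t₁:ℝ)) = Real.pi * 1 := by linear_combination hval
    exact mul_left_cancel₀ Real.pi_ne_zero h'
  have h2k' : 2 * cnt t₁ = 1 := by exact_mod_cast h2k
  omega

/-! ## KT has no isolated points -/

lemma KT_noIso (R : ℝ) (T : ℕ → ℂ × ℂ → ℂ × ℂ) (hR : 1 ≤ R)
    (hT : ∀ n z, z ∈ WPlus R → T n z ∈ VPlus' R ∧ 2 * norm z.2 ≤ norm (T n z).2)
    (hB : ∀ n z, T n z ∈ WMinus R → z ∈ VMinus' R ∧ 2 * norm (T n z).1 ≤ norm z.1)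
    (hpoly : ∀ n, ∃ P Q : Polynomial (Polynomial ℂ),
      ∀ z : ℂ × ℂ, orbOf T n z = (pev z P, pev z Q)) :
    ∀ z ∈ KT R T, ∀ ε : ℝ, 0 < ε → ∃ z', z' ∈ KT R T ∧ z' ≠ z ∧ dist z' z < ε := by
  intro z hz ε hε
  by_contra hcon
  push_neg at hcon
  set η : ℝ := ε/16 with hηdef
  have hη : 0 < η := by positivity
  have h8η : 8*η = ε/2 := by rw [hηdef]; ring
  have hiso : ∀ w ∈ KT R T, w ∈ Metric.closedBall z (8*η) → w = z := by
    intro w hw hwb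
    by_contra hne
    have h1 := hcon w hw hne
    rw [Metric.mem_closedBall, h8η] at hwb
    linarith
  set U : ℕ → Set (ℂ × ℂ) := fun n => (orbOf T n)⁻¹' (VPlus' R) with hU
  have hUopen : ∀ n, IsOpen (U n) := fun n => (VPlus'_open).preimage (orbOf_continuous T hpoly n)
  have hUmono : Monotone U := by
    intro n m hnm w hw
    have := (escVP R T hT hw (m - n)).1
    rwa [show n + (m-n) = m by omega] at this
  set Shell : Set (ℂ × ℂ) := Metric.closedBall z (8*η) \ Metric.ball z η with hShell
  have hShellcomp : IsCompact Shell :=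
    IsCompact.of_isClosed_subset (isCompact_closedBall _ _)
      (Metric.isClosed_closedBall.sdiff Metric.isOpen_ball) Set.diff_subset
  have hShellcover : Shell ⊆ ⋃ n, U n := by
    intro w hw
    by_cases hwK : w ∈ KT R T
    · exfalso
      have := hiso w hwK hw.1
      rw [this] at hw
      exact hw.2 (Metric.mem_ball_self hη)
    · simp only [KT, Set.mem_setOf_eq] at hwK
      push_neg at hwK
      obtain ⟨n, hn⟩ := hwK
      exact Set.mem_iUnion.mpr ⟨n, hn⟩
  obtain ⟨N₁, hN₁⟩ := hShellcomp.elim_directed_cover U hUopen hShellcover hUmono.directed_le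
  set E : ℕ → Set (ℂ × ℂ) := fun n =>
    {w | w ∈ Metric.closedBall z (8*η) ∧ ∀ k, k ≤ n → orbOf T k w ∉ VPlus' R} with hE
  have hEclosed : ∀ n, IsClosed (E n) := by
    intro n
    have : E n = Metric.closedBall z (8*η) ∩
        ⋂ k ∈ {k | k ≤ n}, (orbOf T k)⁻¹' (VPlus' R)ᶜ := by
      ext w; simp [hE]
    rw [this]
    exact Metric.isClosed_closedBall.inter (isClosed_biInter fun k _ =>
      (VPlus'_open).isClosed_compl.preimage (orbOf_continuous T hpoly k))
  have hEcomp : ∀ n, IsCompact (E n) := fun n =>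
    IsCompact.of_isClosed_subset (isCompact_closedBall _ _) (hEclosed n) (fun w hw => hw.1)
  have hEanti : ∀ n, E (n+1) ⊆ E n := fun n w hw => ⟨hw.1, fun k hk => hw.2 k (by omega)⟩
  have hzball : z ∈ Metric.ball z η := Metric.mem_ball_self hη
  obtain ⟨N₂, hN₂⟩ : ∃ N₂, E N₂ ⊆ Metric.ball z η := by
    by_contra hcon2
    push_neg at hcon2
    have hne : ∀ n, (E n \ Metric.ball z η).Nonempty := by
      intro n
      obtain ⟨w, hw1, hw2⟩ := Set.not_subset.mp (hcon2 n)
      exact ⟨w, hw1, hw2⟩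
    have hint := IsCompact.nonempty_iInter_of_sequence_nonempty_isCompact_isClosed
      (fun n => E n \ Metric.ball z η)
      (fun n w hw => ⟨hEanti n hw.1, hw.2⟩) hne
      (IsCompact.of_isClosed_subset (hEcomp 0) ((hEclosed 0).sdiff Metric.isOpen_ball)
        Set.diff_subset)
      (fun n => (hEclosed n).sdiff Metric.isOpen_ball)
    obtain ⟨w, hw⟩ := hint
    have hwall : ∀ n, w ∈ E n \ Metric.ball z η := fun n => Set.mem_iInter.mp hw n
    have hwK : w ∈ KT R T := by
      intro n
      exact (hwall n).1.2 n le_rfl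
    have := hiso w hwK (hwall 0).1.1
    exact (hwall 0).2 (this ▸ hzball)
  obtain ⟨C, hC⟩ := isBounded_iff_forall_norm_le.mp ((bounded_iff_KT R T hR hT hB z).mpr hz)
  obtain ⟨k₀, hk₀⟩ := pow_unbounded_of_one_lt C (one_lt_two (α := ℝ))
  set N : ℕ := max N₂ (N₁ + k₀) with hN
  obtain ⟨P, Q, hPQ⟩ := hpoly N
  have hyQ : ∀ w : ℂ × ℂ, (orbOf T N w).2 = pev w Q := fun w => by rw [hPQ w]
  have hconf : ∀ w ∈ Metric.closedBall z (8*η), pev w Q = 0 → w ∈ Metric.ball z η := by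
    intro w hwball hw0
    have hnotV : ∀ k, k ≤ N → orbOf T k w ∉ VPlus' R := by
      intro k hk hmem
      have h1 := (escVP R T hT hmem (N - k)).1
      rw [show k + (N-k) = N by omega] at h1
      have h2 : R < norm (orbOf T N w).2 := lt_of_le_of_lt (le_max_left _ _) h1
      rw [hyQ w, hw0] at h2
      simp only [norm_zero] at h2
      linarith
    have hwE : w ∈ E N₂ := ⟨hwball, fun k hk => hnotV k (le_trans hk (le_max_left _ _))⟩
    exact hN₂ hwE
  have hnozero := no_zero_in_ball z η hη Q hconf
  -- vertical slice through z
  set q0 : Polynomial ℂ := (Q.eval (Polynomial.C z.1)).comp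
    (Polynomial.X + Polynomial.C z.2) with hq0
  have hq0e : ∀ lam : ℂ, q0.eval lam = pev (z.1, lam + z.2) Q := by
    intro lam
    simp only [hq0, Polynomial.eval_comp, Polynomial.eval_add, Polynomial.eval_X,
      Polynomial.eval_C]
    rfl
  have hmemslice : ∀ lam : ℂ, norm lam ≤ 8*η →
      ((z.1, lam + z.2) : ℂ × ℂ) ∈ Metric.closedBall z (8*η) := by
    intro lam hlam
    rw [Metric.mem_closedBall, Prod.dist_eq, Complex.dist_eq, Complex.dist_eq]
    simp only [sub_self, norm_zero, add_sub_cancel_right]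
    exact max_le (by linarith) hlam
  have hq0ne : ∀ lam : ℂ, norm lam ≤ 8*η → q0.eval lam ≠ 0 := by
    intro lam hlam
    rw [hq0e]
    exact hnozero _ (hmemslice lam hlam)
  have hsph : ∀ lam : ℂ, norm lam = 8*η → (2:ℝ)^k₀ ≤ norm (q0.eval lam) := by
    intro lam hlam
    set w : ℂ × ℂ := (z.1, lam + z.2) with hw
    have hwShell : w ∈ Shell := by
      refine ⟨hmemslice lam hlam.le, ?_⟩
      rw [Metric.mem_ball, Prod.dist_eq, Complex.dist_eq, Complex.dist_eq]
      simp only [hw, sub_self, norm_zero, add_sub_cancel_right]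
      push_neg
      rw [max_eq_right (by rw [hlam]; positivity)]
      rw [hlam]; linarith
    have hesc : orbOf T N₁ w ∈ VPlus' R := hN₁ hwShell
    have h1 := escVP R T hT hesc (N - N₁)
    rw [show N₁ + (N - N₁) = N by
      have : N₁ + k₀ ≤ N := le_max_right _ _
      omega] at h1
    have h2 : R < norm (orbOf T N₁ w).2 := lt_of_le_of_lt (le_max_left _ _) hesc
    have h3 : (2:ℝ)^k₀ ≤ 2^(N - N₁) := by
      refine pow_le_pow_right₀ one_le_two ?_
      have : N₁ + k₀ ≤ N := le_max_right _ _
      omega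
    have h4 : (2:ℝ)^(N-N₁) * 1 ≤ 2^(N-N₁) * norm (orbOf T N₁ w).2 :=
      mul_le_mul_of_nonneg_left (by linarith) (by positivity)
    have h5 : norm (orbOf T N w).2 = norm (q0.eval lam) := by
      rw [hyQ w, hq0e]
    rw [h5] at h1
    have h6 := h1.2
    calc (2:ℝ)^k₀ = 2^k₀ * 1 := by ring
      _ ≤ 2^(N-N₁) * 1 := by linarith
      _ ≤ 2^(N-N₁) * norm (orbOf T N₁ w).2 := h4
      _ ≤ _ := h6
  -- minimum modulus principle on the slice disc
  have hball8 : (0:ℝ) < 8*η := by positivity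
  have hminmod : (2:ℝ)^k₀ ≤ norm (q0.eval 0) := by
    set f : ℂ → ℂ := fun lam => (q0.eval lam)⁻¹ with hf
    have hdiff : DiffContOnCl ℂ f (Metric.ball (0:ℂ) (8*η)) := by
      constructor
      · refine DifferentiableOn.inv ((q0.differentiable).differentiableOn) ?_
        intro lam hlam
        rw [Metric.mem_ball, dist_zero_right] at hlam
        exact hq0ne lam hlam.le
      · rw [closure_ball (0:ℂ) (ne_of_gt hball8)]
        refine ContinuousOn.inv₀ ((q0.continuous).continuousOn) ?_
        intro lam hlam
        rw [Metric.mem_closedBall, dist_zero_right] at hlam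
        exact hq0ne lam hlam
    have hfr : ∀ x ∈ frontier (Metric.ball (0:ℂ) (8*η)), ‖f x‖ ≤ ((2:ℝ)^k₀)⁻¹ := by
      intro x hx
      rw [frontier_ball (0:ℂ) (ne_of_gt hball8), mem_sphere_zero_iff_norm] at hx
      rw [hf]
      simp only [norm_inv]
      exact inv_anti₀ (by positivity) (hsph x hx)
    have h0mem : (0:ℂ) ∈ closure (Metric.ball (0:ℂ) (8*η)) := by
      rw [closure_ball (0:ℂ) (ne_of_gt hball8)]
      exact Metric.mem_closedBall_self hball8.le
    have := Complex.norm_le_of_forall_mem_frontier_norm_le Metric.isBounded_ball hdiff hfr h0mem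
    rw [hf] at this
    simp only [norm_inv] at this
    have habs0 : 0 < norm (q0.eval 0) :=
      norm_pos_iff.mpr (hq0ne 0 (by simp only [norm_zero]; positivity))
    rwa [inv_le_inv₀ habs0 (by positivity)] at this
  -- contradiction with the bounded orbit of z
  have hzeq : ((z.1, (0:ℂ) + z.2) : ℂ × ℂ) = z := by
    rw [zero_add]
  have hle : norm (q0.eval 0) ≤ C := by
    rw [hq0e, hzeq, ← hyQ z]
    have h1 : ‖orbOf T N z‖ ≤ C := hC _ ⟨N, rfl⟩
    have h2 : norm (orbOf T N z).2 ≤ ‖orbOf T N z‖ := by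
      exact norm_snd_le _
    linarith
  have hgt : C < (2:ℝ)^k₀ := hk₀
  linarith

/-! ## Topological assembly: the frontier is perfect and uncountable -/

lemma segment_crossing {K : Set (ℂ × ℂ)} (hK : IsClosed K) {a b : ℂ × ℂ}
    (ha : a ∈ K) (hb : b ∉ K) : ∃ w ∈ segment ℝ a b, w ∈ frontier K := by
  by_contra hno
  push_neg at hno
  have hconn : IsPreconnected (segment ℝ a b) := (convex_segment a b).isPreconnected
  have hcover : segment ℝ a b ⊆ interior K ∪ Kᶜ := by
    intro w hw
    by_cases hwK : w ∈ K
    · left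
      have hfr := hno w hw
      have : frontier K = K \ interior K := hK.frontier_eq
      rw [this] at hfr
      by_contra hint
      exact hfr ⟨hwK, hint⟩
    · exact Or.inr hwK
  have hane : (segment ℝ a b ∩ interior K).Nonempty := by
    refine ⟨a, left_mem_segment ℝ a b, ?_⟩
    have hfr := hno a (left_mem_segment ℝ a b)
    rw [hK.frontier_eq] at hfr
    by_contra hint
    exact hfr ⟨ha, hint⟩
  have hbne : (segment ℝ a b ∩ Kᶜ).Nonempty := ⟨b, right_mem_segment ℝ a b, hb⟩
  obtain ⟨x, hx⟩ := hconn (interior K) Kᶜ isOpen_interior hK.isOpen_compl hcover hane hbne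
  exact hx.2.2 (interior_subset hx.2.1)

lemma exists_good_endpoint {k z b : ℂ × ℂ} (hkz : k ≠ z) {β : ℝ} (hβ : 0 < β) :
    ∃ v : ℂ × ℂ, ‖v‖ ≤ β ∧ z ∉ segment ℝ k (b + v) := by
  by_contra hcon
  push_neg at hcon
  set e₁ : ℂ × ℂ := (((β:ℝ):ℂ), 0) with he₁
  set e₂ : ℂ × ℂ := (0, ((β:ℝ):ℂ)) with he₂
  have hn1 : ‖e₁‖ ≤ β := by
    rw [he₁, Prod.norm_def]
    simp [Complex.norm_real, abs_of_pos hβ]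
    exact hβ.le
  have hn2 : ‖e₂‖ ≤ β := by
    rw [he₂, Prod.norm_def]
    simp [Complex.norm_real, abs_of_pos hβ]
    exact hβ.le
  have hn0 : ‖(0 : ℂ × ℂ)‖ ≤ β := by simp [hβ.le]
  have hmem : ∀ v : ℂ × ℂ, ‖v‖ ≤ β → ∃ t : ℝ, t ∈ Set.Icc (0:ℝ) 1 ∧
      z = k + t • (b + v - k) := by
    intro v hv
    have := hcon v hv
    rw [segment_eq_image'] at this
    obtain ⟨t, ht, hteq⟩ := this
    exact ⟨t, ht, hteq.symm⟩
  obtain ⟨t₁, ht₁, he1⟩ := hmem 0 hn0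
  obtain ⟨t₂, ht₂, he2⟩ := hmem e₁ hn1
  obtain ⟨t₃, ht₃, he3⟩ := hmem e₂ hn2
  rw [add_zero] at he1
  have hu : z - k ≠ 0 := sub_ne_zero.mpr (Ne.symm hkz)
  have ht₁0 : t₁ ≠ 0 := by
    intro h; rw [h, zero_smul, add_zero] at he1; exact hkz (he1.symm)
  have ht₂0 : t₂ ≠ 0 := by
    intro h; rw [h, zero_smul, add_zero] at he2; exact hkz (he2.symm)
  have ht₃0 : t₃ ≠ 0 := by
    intro h; rw [h, zero_smul, add_zero] at he3; exact hkz (he3.symm)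
  -- express the direction vectors
  have hb1 : b - k = t₁⁻¹ • (z - k) := by
    have : t₁ • (b - k) = z - k := by
      rw [he1]; abel
    rw [← this, smul_smul, inv_mul_cancel₀ ht₁0, one_smul]
  have hb2 : b + e₁ - k = t₂⁻¹ • (z - k) := by
    have : t₂ • (b + e₁ - k) = z - k := by
      rw [he2]; abel
    rw [← this, smul_smul, inv_mul_cancel₀ ht₂0, one_smul]
  have hb3 : b + e₂ - k = t₃⁻¹ • (z - k) := by
    have : t₃ • (b + e₂ - k) = z - k := by
      rw [he3]; abel
    rw [← this, smul_smul, inv_mul_cancel₀ ht₃0, one_smul]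
  have hee1 : e₁ = (t₂⁻¹ - t₁⁻¹) • (z - k) := by
    have : e₁ = (b + e₁ - k) - (b - k) := by abel
    rw [this, hb2, hb1, sub_smul]
  have hee2 : e₂ = (t₃⁻¹ - t₁⁻¹) • (z - k) := by
    have : e₂ = (b + e₂ - k) - (b - k) := by abel
    rw [this, hb3, hb1, sub_smul]
  set s₁ : ℝ := t₂⁻¹ - t₁⁻¹
  set s₂ : ℝ := t₃⁻¹ - t₁⁻¹
  have hc1 : ((β:ℝ):ℂ) = s₁ • (z - k).1 := congrArg Prod.fst hee1
  have hc2 : (0:ℂ) = s₁ • (z - k).2 := congrArg Prod.snd hee1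
  have hc3 : (0:ℂ) = s₂ • (z - k).1 := congrArg Prod.fst hee2
  have hc4 : ((β:ℝ):ℂ) = s₂ • (z - k).2 := congrArg Prod.snd hee2
  have hβ0 : ((β:ℝ):ℂ) ≠ 0 := by
    simp only [ne_eq, Complex.ofReal_eq_zero]
    exact ne_of_gt hβ
  have hs₁ : s₁ ≠ 0 := by
    intro h; rw [h, zero_smul] at hc1; exact hβ0 hc1
  have hs₂ : s₂ ≠ 0 := by
    intro h; rw [h, zero_smul] at hc4; exact hβ0 hc4
  have hz2 : (z - k).2 = 0 := by
    rcases smul_eq_zero.mp hc2.symm with h | h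
    · exact absurd h hs₁
    · exact h
  rw [hz2, smul_zero] at hc4
  exact hβ0 hc4

lemma frontier_noIso {K : Set (ℂ × ℂ)} (hK : IsClosed K)
    (hKiso : ∀ z ∈ K, ∀ ε : ℝ, 0 < ε → ∃ z', z' ∈ K ∧ z' ≠ z ∧ dist z' z < ε) :
    ∀ z ∈ frontier K, ∀ ε : ℝ, 0 < ε → ∃ w, w ∈ frontier K ∧ w ≠ z ∧ dist w z < ε := by
  intro z hzf ε hε
  have hzK : z ∈ K := hK.frontier_subset hzf
  have hzcl : z ∈ closure Kᶜ := by
    rw [frontier_eq_closure_inter_closure] at hzf; exact hzf.2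
  obtain ⟨b, hbd, hbK⟩ : ∃ b, dist z b < ε/4 ∧ b ∈ Kᶜ := by
    rw [Metric.mem_closure_iff] at hzcl
    obtain ⟨b, hb1, hb2⟩ := hzcl (ε/4) (by positivity)
    exact ⟨b, hb2, hb1⟩
  obtain ⟨β, hβ0, hβball⟩ := Metric.isOpen_iff.mp hK.isOpen_compl b hbK
  set β' : ℝ := min (β/2) (ε/16) with hβ'
  have hβ'0 : 0 < β' := by
    rw [hβ']; exact lt_min (by positivity) (by positivity)
  obtain ⟨k, hkK, hkne, hkd⟩ := hKiso z hzK (ε/4) (by positivity)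
  obtain ⟨v, hvn, hzseg⟩ := exists_good_endpoint (b := b) hkne hβ'0
  set b' : ℂ × ℂ := b + v with hb'def
  have hb'K : b' ∉ K := by
    have : b' ∈ Metric.ball b β := by
      rw [Metric.mem_ball, hb'def, dist_eq_norm, add_sub_cancel_left]
      calc ‖v‖ ≤ β' := hvn
        _ ≤ β/2 := min_le_left _ _
        _ < β := by linarith
    exact hβball this
  have hkball : k ∈ Metric.ball z (ε/2) := by
    rw [Metric.mem_ball]
    calc dist k z < ε/4 := hkd
      _ < ε/2 := by linarith
  have hb'ball : b' ∈ Metric.ball z (ε/2) := by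
    rw [Metric.mem_ball]
    calc dist b' z ≤ dist b' b + dist b z := dist_triangle _ _ _
      _ ≤ β' + dist b z := by
          rw [hb'def, dist_eq_norm, add_sub_cancel_left]; linarith [hvn]
      _ < ε/16 + ε/4 := by
          have h1 : β' ≤ ε/16 := min_le_right _ _
          have h2 : dist b z < ε/4 := by rwa [dist_comm] at hbd
          linarith
      _ < ε/2 := by linarith
  obtain ⟨w, hwseg, hwf⟩ := segment_crossing hK hkK hb'K
  refine ⟨w, hwf, ?_, ?_⟩
  · intro h; rw [h] at hwseg; exact hzseg hwseg
  · have hsub := (convex_ball z (ε/2)).segment_subset hkball hb'ball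
    have := hsub hwseg
    rw [Metric.mem_ball] at this
    linarith

lemma preconnected_space_C2 : PreconnectedSpace (ℂ × ℂ) :=
  ⟨(convex_univ : Convex ℝ (Set.univ : Set (ℂ × ℂ))).isPreconnected⟩

lemma frontier_nonempty_of {K : Set (ℂ × ℂ)} (hne : K.Nonempty) (hKu : K ≠ Set.univ) :
    (frontier K).Nonempty := by
  haveI := preconnected_space_C2
  by_contra h
  rw [Set.not_nonempty_iff_eq_empty] at h
  have hclopen : IsClopen K := isClopen_iff_frontier_eq_empty.mpr h
  rcases isClopen_iff.mp hclopen with h1 | h1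
  · exact hne.ne_empty h1
  · exact hKu h1

lemma uncountable_frontier {K : Set (ℂ × ℂ)}
    (hfront_ne : (frontier K).Nonempty)
    (hnoiso : ∀ z ∈ frontier K, ∀ ε : ℝ, 0 < ε →
      ∃ w, w ∈ frontier K ∧ w ≠ z ∧ dist w z < ε) :
    ¬ (frontier K).Countable := by
  intro hcnt
  have hperf : Perfect (frontier K) := by
    refine ⟨isClosed_frontier, ?_⟩
    intro x hx
    rw [accPt_iff_nhds]
    intro U hU
    obtain ⟨ε, hε0, hεball⟩ := Metric.mem_nhds_iff.mp hU
    obtain ⟨w, hwf, hwne, hwd⟩ := hnoiso x hx ε hε0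
    exact ⟨w, ⟨hεball (by rwa [Metric.mem_ball]), hwf⟩, hwne⟩
  obtain ⟨f, hfr, _, hfi⟩ := hperf.exists_nat_bool_injection hfront_ne
  have h1 : (Set.range f).Countable := hcnt.mono hfr
  haveI h2 : Countable (Set.range f) := h1.to_subtype
  haveI h3 : Countable (ℕ → Bool) := Countable.of_equiv _ (Equiv.ofInjective f hfi).symm
  haveI h4 : Countable (Set ℕ) := by
    classical
    have hg : Function.Injective (fun (s : Set ℕ) (n : ℕ) => decide (n ∈ s)) := by
      intro s s' hss
      ext n
      have := congrFun hss n
      simpa using this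
    exact Function.Injective.countable hg
  obtain ⟨g, hg⟩ := Countable.exists_injective_nat (Set ℕ)
  exact Function.cantor_injective g hg

/-! ## Master theorem for a generic system -/

theorem KT_master (R : ℝ) (T : ℕ → ℂ × ℂ → ℂ × ℂ) (hR : 1 ≤ R)
    (hT : ∀ n z, z ∈ WPlus R → T n z ∈ VPlus' R ∧ 2 * norm z.2 ≤ norm (T n z).2)
    (hB : ∀ n z, T n z ∈ WMinus R → z ∈ VMinus' R ∧ 2 * norm (T n z).1 ≤ norm z.1)
    (hpoly : ∀ n, ∃ P Q : Polynomial (Polynomial ℂ),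
      ∀ z : ℂ × ℂ, orbOf T n z = (pev z P, pev z Q))
    (hdeg : ∀ n, ∃ q : Polynomial ℂ, 1 ≤ q.natDegree ∧
      ∀ w : ℂ, (orbOf T n ((0:ℂ), w)).2 = q.eval w) :
    (∀ z ∈ frontier (KT R T), z ∈ closure (frontier (KT R T) \ {z})) ∧
    ¬ (frontier (KT R T)).Countable := by
  have hcl := KT_closed R T hpoly
  have hiso := KT_noIso R T hR hT hB hpoly
  have hfno := frontier_noIso hcl hiso
  have hfne := frontier_nonempty_of (KT_nonempty R T hR hT hpoly hdeg) (KT_ne_univ R T hR)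
  constructor
  · intro z hz
    rw [Metric.mem_closure_iff]
    intro ε hε
    obtain ⟨w, hw1, hw2, hw3⟩ := hfno z hz ε hε
    exact ⟨w, ⟨hw1, by simp [hw2]⟩, by rwa [dist_comm]⟩
  · exact uncountable_frontier hfne hfno

/-! ## Instantiation: forward system -/

section Inst

variable (γ : ℤ → HenonMap)

def Tf : ℕ → ℂ × ℂ → ℂ × ℂ := fun n => (γ (n : ℤ)).toFun

def Tb : ℕ → ℂ × ℂ → ℂ × ℂ := fun n z => Prod.swap ((γ (-((n:ℤ)+1))).invFun (Prod.swap z))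

lemma orbOf_succ' (T : ℕ → ℂ × ℂ → ℂ × ℂ) (n : ℕ) (z : ℂ × ℂ) :
    orbOf T (n+1) z = T n (orbOf T n z) := rfl

lemma Tf_apply (n : ℕ) (z : ℂ × ℂ) : Tf γ n z = (γ (n:ℤ)).toFun z := rfl

lemma Tb_apply (n : ℕ) (z : ℂ × ℂ) :
    Tb γ n z = Prod.swap ((γ (-((n:ℤ)+1))).invFun (Prod.swap z)) := rfl

lemma fwd_eq_orb : ∀ n, fwd γ n = orbOf (Tf γ) n := by
  intro n
  induction n with
  | zero => rfl
  | succ n ih => funext z; show (γ (n:ℤ)).toFun (fwd γ n z) = Tf γ n (orbOf (Tf γ) n z); rw [ih]; rfl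

lemma bwd_eq_orb : ∀ n z, orbOf (Tb γ) n (Prod.swap z) = Prod.swap (bwd γ n z) := by
  intro n
  induction n with
  | zero => intro z; rfl
  | succ n ih =>
      intro z
      show Tb γ n (orbOf (Tb γ) n (Prod.swap z)) = _
      rw [ih]
      show Prod.swap ((γ (-((n:ℤ)+1))).invFun (Prod.swap (Prod.swap (bwd γ n z)))) = _
      rw [Prod.swap_swap]
      rfl

variable {Γ : Set HenonMap} (hγΓ : ∀ j : ℤ, γ j ∈ Γ) {R : ℝ}
  (hgood : ∀ f ∈ Γ,
      (∀ z : ℂ × ℂ, z ∈ WPlus R →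
        (f.toFun z ∈ VPlus' R ∧ 2 * norm z.2 ≤ norm (f.toFun z).2)) ∧
      (∀ z : ℂ × ℂ, z ∈ WMinus R →
        (f.invFun z ∈ VMinus' R ∧ 2 * norm z.1 ≤ norm (f.invFun z).1)))

lemma swap_mem_WMinus {z : ℂ × ℂ} (h : z ∈ WPlus R) : Prod.swap z ∈ WMinus R := by
  simp only [WPlus, Set.mem_setOf_eq] at h
  simp only [WMinus, Set.mem_setOf_eq, Prod.fst_swap, Prod.snd_swap]
  exact h

lemma mem_VPlus_of_swap {z : ℂ × ℂ} (h : Prod.swap z ∈ VMinus' R) : z ∈ VPlus' R := by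
  simp only [VMinus', Set.mem_setOf_eq, Prod.fst_swap, Prod.snd_swap] at h
  exact h

lemma mem_VMinus_of_swap {z : ℂ × ℂ} (h : Prod.swap z ∈ VPlus' R) : z ∈ VMinus' R := by
  simp only [VPlus', Set.mem_setOf_eq, Prod.fst_swap, Prod.snd_swap] at h
  exact h

include hγΓ hgood in
lemma hT_Tf : ∀ n z, z ∈ WPlus R →
    Tf γ n z ∈ VPlus' R ∧ 2 * norm z.2 ≤ norm ((Tf γ n z)).2 :=
  fun n z hz => (hgood (γ (n:ℤ)) (hγΓ _)).1 z hz

include hγΓ hgood in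
lemma hB_Tf : ∀ n z, Tf γ n z ∈ WMinus R →
    z ∈ VMinus' R ∧ 2 * norm ((Tf γ n z)).1 ≤ norm z.1 := by
  intro n z hz
  have h1 := (hgood (γ (n:ℤ)) (hγΓ _)).2 (Tf γ n z) hz
  rw [show (γ (n:ℤ)).invFun (Tf γ n z) = z from henon_left_inv _ z] at h1
  exact h1

include hγΓ hgood in
lemma hT_Tb : ∀ n z, z ∈ WPlus R →
    Tb γ n z ∈ VPlus' R ∧ 2 * norm z.2 ≤ norm ((Tb γ n z)).2 := by
  intro n z hz
  have h1 := (hgood (γ (-((n:ℤ)+1))) (hγΓ _)).2 (Prod.swap z) (swap_mem_WMinus hz)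
  rw [Tb_apply]
  constructor
  · exact mem_VPlus_of_swap (by rw [Prod.swap_swap]; exact h1.1)
  · rw [Prod.snd_swap]
    have := h1.2
    rwa [Prod.fst_swap] at this

include hγΓ hgood in
lemma hB_Tb : ∀ n z, Tb γ n z ∈ WMinus R →
    z ∈ VMinus' R ∧ 2 * norm ((Tb γ n z)).1 ≤ norm z.1 := by
  intro n z hz
  rw [Tb_apply] at hz
  have hmem : (γ (-((n:ℤ)+1))).invFun (Prod.swap z) ∈ WPlus R := by
    simp only [WMinus, Set.mem_setOf_eq, Prod.fst_swap, Prod.snd_swap] at hz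
    simp only [WPlus, Set.mem_setOf_eq]
    exact hz
  have h1 := (hgood (γ (-((n:ℤ)+1))) (hγΓ _)).1 _ hmem
  rw [henon_right_inv] at h1
  constructor
  · exact mem_VMinus_of_swap h1.1
  · rw [Tb_apply, Prod.fst_swap]
    have := h1.2
    rwa [Prod.snd_swap] at this

lemma hpoly_Tf : ∀ n, ∃ P Q : Polynomial (Polynomial ℂ),
    ∀ z : ℂ × ℂ, orbOf (Tf γ) n z = (pev z P, pev z Q) := by
  intro n
  induction n with
  | zero =>
      exact ⟨Polynomial.X, Polynomial.C Polynomial.X, fun z => by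
        simp only [orbOf, id_eq, pev_X, pev_CX]⟩
  | succ n ih =>
      obtain ⟨P, Q, hPQ⟩ := ih
      set f := γ (n:ℤ)
      refine ⟨Q + Polynomial.C (Polynomial.C f.a),
        Polynomial.aeval Q f.p - Polynomial.C (Polynomial.C f.δ) * P, fun z => ?_⟩
      rw [orbOf_succ', Tf_apply, hPQ z]
      simp only [HenonMap.toFun, map_add, map_sub, map_mul, pev_CC, pev_aeval]
      rfl

lemma hpoly_Tb : ∀ n, ∃ P Q : Polynomial (Polynomial ℂ),
    ∀ z : ℂ × ℂ, orbOf (Tb γ) n z = (pev z P, pev z Q) := by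
  intro n
  induction n with
  | zero =>
      exact ⟨Polynomial.X, Polynomial.C Polynomial.X, fun z => by
        simp only [orbOf, id_eq, pev_X, pev_CX]⟩
  | succ n ih =>
      obtain ⟨P, Q, hPQ⟩ := ih
      set f := γ (-((n:ℤ)+1))
      refine ⟨Q - Polynomial.C (Polynomial.C f.a),
        Polynomial.C (Polynomial.C f.δ⁻¹) *
          (Polynomial.aeval (Q - Polynomial.C (Polynomial.C f.a)) f.p - P), fun z => ?_⟩
      rw [orbOf_succ', Tb_apply, hPQ z]
      simp only [HenonMap.invFun, Prod.swap_prod_mk, map_sub, map_mul, pev_CC, pev_aeval]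
      rfl

lemma hdeg_Tf : ∀ n, ∃ q : Polynomial ℂ, 1 ≤ q.natDegree ∧
    ∀ w : ℂ, (orbOf (Tf γ) n ((0:ℂ), w)).2 = q.eval w := by
  intro n
  suffices h : ∃ qx qy : Polynomial ℂ,
      (∀ w : ℂ, orbOf (Tf γ) n ((0:ℂ), w) = (qx.eval w, qy.eval w)) ∧
      qx.natDegree < qy.natDegree ∧ 1 ≤ qy.natDegree by
    obtain ⟨qx, qy, h1, _, h3⟩ := h
    exact ⟨qy, h3, fun w => by rw [h1 w]⟩
  induction n with
  | zero =>
      refine ⟨Polynomial.C 0, Polynomial.X, fun w => by simp [orbOf], ?_, ?_⟩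
      · simp [Polynomial.natDegree_X]
      · simp [Polynomial.natDegree_X]
  | succ n ih =>
      obtain ⟨qx, qy, h1, h2, h3⟩ := ih
      set f := γ (n:ℤ)
      have hdp : 2 ≤ f.p.natDegree := f.hdeg
      have hcomp : (f.p.comp qy).natDegree = f.p.natDegree * qy.natDegree :=
        Polynomial.natDegree_comp
      have hlt : (Polynomial.C f.δ * qx).natDegree < (f.p.comp qy).natDegree := by
        calc (Polynomial.C f.δ * qx).natDegree ≤ qx.natDegree := Polynomial.natDegree_C_mul_le _ _
          _ < qy.natDegree := h2
          _ ≤ f.p.natDegree * qy.natDegree := Nat.le_mul_of_pos_left _ (by omega)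
          _ = (f.p.comp qy).natDegree := hcomp.symm
      refine ⟨qy + Polynomial.C f.a, f.p.comp qy - Polynomial.C f.δ * qx, fun w => ?_, ?_, ?_⟩
      · rw [orbOf_succ', Tf_apply, h1 w]
        simp only [HenonMap.toFun, Polynomial.eval_add, Polynomial.eval_C, Polynomial.eval_sub,
          Polynomial.eval_mul, Polynomial.eval_comp]
        rfl
      · rw [Polynomial.natDegree_sub_eq_left_of_natDegree_lt hlt, Polynomial.natDegree_add_C,
          hcomp]
        calc qy.natDegree < 2 * qy.natDegree := by omega
          _ ≤ f.p.natDegree * qy.natDegree := Nat.mul_le_mul_right _ hdp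
      · rw [Polynomial.natDegree_sub_eq_left_of_natDegree_lt hlt, hcomp]
        calc 1 ≤ qy.natDegree := h3
          _ ≤ f.p.natDegree * qy.natDegree := Nat.le_mul_of_pos_left _ (by omega)

lemma hdeg_Tb : ∀ n, ∃ q : Polynomial ℂ, 1 ≤ q.natDegree ∧
    ∀ w : ℂ, (orbOf (Tb γ) n ((0:ℂ), w)).2 = q.eval w := by
  intro n
  suffices h : ∃ qx qy : Polynomial ℂ,
      (∀ w : ℂ, orbOf (Tb γ) n ((0:ℂ), w) = (qx.eval w, qy.eval w)) ∧
      qx.natDegree < qy.natDegree ∧ 1 ≤ qy.natDegree by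
    obtain ⟨qx, qy, h1, _, h3⟩ := h
    exact ⟨qy, h3, fun w => by rw [h1 w]⟩
  induction n with
  | zero =>
      refine ⟨Polynomial.C 0, Polynomial.X, fun w => by simp [orbOf], ?_, ?_⟩
      · simp [Polynomial.natDegree_X]
      · simp [Polynomial.natDegree_X]
  | succ n ih =>
      obtain ⟨qx, qy, h1, h2, h3⟩ := ih
      set f := γ (-((n:ℤ)+1))
      have hdp : 2 ≤ f.p.natDegree := f.hdeg
      have hδinv : f.δ⁻¹ ≠ 0 := inv_ne_zero f.hδ
      have hsubC : (qy - Polynomial.C f.a).natDegree = qy.natDegree :=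
        Polynomial.natDegree_sub_C
      have hcomp : (f.p.comp (qy - Polynomial.C f.a)).natDegree
          = f.p.natDegree * qy.natDegree := by
        rw [Polynomial.natDegree_comp, hsubC]
      have hlt : qx.natDegree < (f.p.comp (qy - Polynomial.C f.a)).natDegree := by
        rw [hcomp]
        calc qx.natDegree < qy.natDegree := h2
          _ ≤ f.p.natDegree * qy.natDegree := Nat.le_mul_of_pos_left _ (by omega)
      refine ⟨qy - Polynomial.C f.a,
        Polynomial.C f.δ⁻¹ * (f.p.comp (qy - Polynomial.C f.a) - qx), fun w => ?_, ?_, ?_⟩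
      · rw [orbOf_succ', Tb_apply, h1 w]
        simp only [HenonMap.invFun, Prod.swap_prod_mk, Polynomial.eval_sub, Polynomial.eval_C,
          Polynomial.eval_mul, Polynomial.eval_comp]
        rfl
      · rw [Polynomial.natDegree_C_mul hδinv,
          Polynomial.natDegree_sub_eq_left_of_natDegree_lt hlt, hsubC, hcomp]
        calc qy.natDegree < 2 * qy.natDegree := by omega
          _ ≤ f.p.natDegree * qy.natDegree := Nat.mul_le_mul_right _ hdp
      · rw [Polynomial.natDegree_C_mul hδinv,
          Polynomial.natDegree_sub_eq_left_of_natDegree_lt hlt, hcomp]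
        calc 1 ≤ qy.natDegree := h3
          _ ≤ f.p.natDegree * qy.natDegree := Nat.le_mul_of_pos_left _ (by omega)

end Inst

/-! ## Final assembly -/

lemma isBounded_range_swap (g : ℕ → ℂ × ℂ) :
    IsBounded (Set.range fun n => Prod.swap (g n)) ↔ IsBounded (Set.range fun n => g n) := by
  rw [isBounded_iff_forall_norm_le, isBounded_iff_forall_norm_le]
  have hnorm : ∀ w : ℂ × ℂ, ‖Prod.swap w‖ = ‖w‖ := fun w => by
    rw [Prod.norm_def, Prod.norm_def, Prod.fst_swap, Prod.snd_swap, max_comm]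
  constructor
  · rintro ⟨C, hC⟩
    exact ⟨C, by rintro x ⟨n, rfl⟩; rw [← hnorm]; exact hC _ ⟨n, rfl⟩⟩
  · rintro ⟨C, hC⟩
    exact ⟨C, by rintro x ⟨n, rfl⟩; rw [hnorm]; exact hC _ ⟨n, rfl⟩⟩

lemma swap_injective' : Function.Injective (Prod.swap : ℂ × ℂ → ℂ × ℂ) := by
  intro a b h
  rw [← Prod.swap_swap a, h, Prod.swap_swap]

lemma swap_surjective' : Function.Surjective (Prod.swap : ℂ × ℂ → ℂ × ℂ) :=
  fun w => ⟨Prod.swap w, Prod.swap_swap w⟩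

theorem stmt_17' (Γ : Set HenonMap) (hne : Γ.Nonempty) (hΓ : ParamBounded Γ)
    (γ : ℤ → HenonMap) (hγ : ∀ j : ℤ, γ j ∈ Γ) :
    (∀ z ∈ frontier (KPlus γ), z ∈ closure (frontier (KPlus γ) \ {z})) ∧
    ¬ (frontier (KPlus γ)).Countable ∧
    (∀ z ∈ frontier (KMinus γ), z ∈ closure (frontier (KMinus γ) \ {z})) ∧
    ¬ (frontier (KMinus γ)).Countable := by
  obtain ⟨R, hR1, hgood⟩ := exists_good Γ hΓ
  have hTf' := hT_Tf γ hγ hgood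
  have hBf' := hB_Tf γ hγ hgood
  have hTb' := hT_Tb γ hγ hgood
  have hBb' := hB_Tb γ hγ hgood
  have hmf := KT_master R (Tf γ) hR1 hTf' hBf' (hpoly_Tf γ) (hdeg_Tf γ)
  have hmb := KT_master R (Tb γ) hR1 hTb' hBb' (hpoly_Tb γ) (hdeg_Tb γ)
  have hKPf : KPlus γ = KT R (Tf γ) := by
    ext z
    simp only [KPlus, Set.mem_setOf_eq]
    rw [show (fun n : ℕ => fwd γ n z) = fun n : ℕ => orbOf (Tf γ) n z from
      funext fun n => by rw [fwd_eq_orb γ n]]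
    exact bounded_iff_KT R (Tf γ) hR1 hTf' hBf' z
  have hKMb : KMinus γ = Prod.swap ⁻¹' (KT R (Tb γ)) := by
    ext z
    simp only [KMinus, Set.mem_setOf_eq, Set.mem_preimage]
    rw [← bounded_iff_KT R (Tb γ) hR1 hTb' hBb' (Prod.swap z)]
    rw [show (fun n : ℕ => orbOf (Tb γ) n (Prod.swap z)) = fun n : ℕ => Prod.swap (bwd γ n z) from
      funext fun n => bwd_eq_orb γ n z]
    exact (isBounded_range_swap _).symm
  have hswf : frontier (KMinus γ) = Prod.swap ⁻¹' frontier (KT R (Tb γ)) := by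
    have h1 := (Homeomorph.prodComm ℂ ℂ).preimage_frontier (KT R (Tb γ))
    rw [Homeomorph.coe_prodComm] at h1
    rw [hKMb, ← h1]
  refine ⟨?_, ?_, ?_, ?_⟩
  · rw [hKPf]; exact hmf.1
  · rw [hKPf]; exact hmf.2
  · intro z hz
    rw [hswf] at hz
    have h2 := hmb.1 (Prod.swap z) hz
    have h3 : Prod.swap ⁻¹' (frontier (KT R (Tb γ)) \ {Prod.swap z})
        = (Prod.swap ⁻¹' frontier (KT R (Tb γ))) \ {z} := by
      rw [Set.preimage_diff]
      congr 1
      ext w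
      simp only [Set.mem_preimage, Set.mem_singleton_iff]
      exact ⟨fun h => swap_injective' h, fun h => by rw [h]⟩
    have h4 := (Homeomorph.prodComm ℂ ℂ).preimage_closure
      (frontier (KT R (Tb γ)) \ {Prod.swap z})
    rw [Homeomorph.coe_prodComm] at h4
    have h5 : z ∈ Prod.swap ⁻¹' closure (frontier (KT R (Tb γ)) \ {Prod.swap z}) := h2
    rw [h4, h3] at h5
    rw [hswf]
    exact h5
  · intro hcnt
    rw [hswf] at hcnt
    have h6 : (frontier (KT R (Tb γ))).Countable := by
      rw [← Set.image_preimage_eq (frontier (KT R (Tb γ))) swap_surjective']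
      exact hcnt.image _
    exact hmb.2 h6

/-- `J_γ± = ∂K_γ±` has no isolated points and is uncountable. -/
theorem stmt_17 (Γ : Set HenonMap) (hne : Γ.Nonempty) (hΓ : ParamBounded Γ)
    (γ : ℤ → HenonMap) (hγ : ∀ j : ℤ, γ j ∈ Γ) :
    (∀ z ∈ frontier (KPlus γ), z ∈ closure (frontier (KPlus γ) \ {z})) ∧
    ¬ (frontier (KPlus γ)).Countable ∧
    (∀ z ∈ frontier (KMinus γ), z ∈ closure (frontier (KMinus γ) \ {z})) ∧
    ¬ (frontier (KMinus γ)).Countable := by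
  exact stmt_17' Γ hne hΓ γ hγ
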